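/- arXiv:2309.01358 — 2 statements merged into one kernel-verified Lean document; each statement's English description precedes it below -/
import Mathlib

section
/- Let G be in class B with diam(G) ≥ 4 and T_G its associated tree. If T_G has exactly two central vertices, then at least one of them is a cut-vertex of G. -/
open SimpleGraph

variable {V : Type*}

/-- `v` is a cut-vertex of the graph `G`: deleting `v` disconnects `G`. -/
def CutVtx (G : SimpleGraph V) (v : V) : Prop :=
  ¬ (G.induce {v}ᶜ).Connected

/-- A nonseparable graph: connected and with no cut-vertex. -/
def NoCutVtx {W : Type*} (H : SimpleGraph W) : Prop :=
  H.Connected ∧ ∀ w : W, (H.induce {w}ᶜ).Connected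

/-- `B` is (the vertex set of) a block of `G`: a maximal nonseparable
induced subgraph. -/
def IsBlockSet (G : SimpleGraph V) (B : Set V) : Prop :=
  NoCutVtx (G.induce B) ∧ ∀ C : Set V, B ⊆ C → NoCutVtx (G.induce C) → B = C

/-- The set of cut-vertices of `G`. -/
def cutSet (G : SimpleGraph V) : Set V := {v | CutVtx G v}

/-- The set `B` induces a complete bipartite graph in `G` with
bipartition `(V1, V2)`. -/
def CompBipOn (G : SimpleGraph V) (B V1 V2 : Set V) : Prop :=
  V1.Nonempty ∧ V2.Nonempty ∧ Disjoint V1 V2 ∧ V1 ∪ V2 = B ∧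
    ∀ x ∈ B, ∀ y ∈ B, (G.Adj x y ↔ (x ∈ V1 ∧ y ∈ V2) ∨ (x ∈ V2 ∧ y ∈ V1))

/-- A bi-block graph: a connected graph all of whose blocks are
complete bipartite. -/
def BiBlockGraph (G : SimpleGraph V) : Prop :=
  G.Connected ∧ ∀ B : Set V, IsBlockSet G B → ∃ V1 V2 : Set V, CompBipOn G B V1 V2

/-- The class 𝓑: bi-block graphs with at least two blocks and at most two
cut-vertices in each block. -/
def ClassB (G : SimpleGraph V) : Prop :=
  BiBlockGraph G ∧
  (∃ B1 B2 : Set V, IsBlockSet G B1 ∧ IsBlockSet G B2 ∧ B1 ≠ B2) ∧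
  ∀ B : Set V, IsBlockSet G B → (B ∩ cutSet G).ncard ≤ 2

/-- `S` is an admissible vertex set for the associated tree `T_G`:
it contains all cut-vertices of `G`, both vertices of every `K_{1,1}` block,
exactly one non-cut-vertex from each partite set of every leaf block,
exactly one non-cut-vertex from the cut-vertex-free partite set of every
bridge block whose two cut-vertices share a partite set, and no other
vertices. -/
def AssocSet (G : SimpleGraph V) (S : Set V) : Prop :=
  (∀ v, CutVtx G v → v ∈ S) ∧
  ∀ B V1 V2 : Set V, IsBlockSet G B → CompBipOn G B V1 V2 →
    ((V1.ncard = 1 ∧ V2.ncard = 1) → B ⊆ S) ∧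
    (¬ (V1.ncard = 1 ∧ V2.ncard = 1) →
      (((B ∩ cutSet G).ncard = 1) →
          (S ∩ (V1 \ cutSet G)).ncard = 1 ∧ (S ∩ (V2 \ cutSet G)).ncard = 1) ∧
      (((B ∩ cutSet G).ncard = 2) →
          (((V1 ∩ cutSet G).ncard = 2) →
              (S ∩ (V2 \ cutSet G)).ncard = 1 ∧ S ∩ (V1 \ cutSet G) = ∅) ∧
          (((V2 ∩ cutSet G).ncard = 2) →
              (S ∩ (V1 \ cutSet G)).ncard = 1 ∧ S ∩ (V2 \ cutSet G) = ∅) ∧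
          (((V1 ∩ cutSet G).ncard = 1 ∧ (V2 ∩ cutSet G).ncard = 1) →
              S ∩ (B \ cutSet G) = ∅)))

/-- The eccentricity of a vertex. -/
noncomputable def ecc (G : SimpleGraph V) (v : V) : ℕ := sSup (Set.range (G.dist v))

/-- The diameter of a graph. -/
noncomputable def gdiam (G : SimpleGraph V) : ℕ := sSup (Set.range (ecc G))

/-- The radius of a graph. -/
noncomputable def gradius (G : SimpleGraph V) : ℕ := sInf (Set.range (ecc G))

/-- The center of a graph: vertices of minimum eccentricity. -/
noncomputable def gcenter (G : SimpleGraph V) : Set V := {v | ecc G v = gradius G}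

/-- The eccentricity matrix of `G`. -/
noncomputable def eccMatrix (G : SimpleGraph V) : Matrix V V ℝ := fun u v =>
  if G.dist u v = min (ecc G u) (ecc G v) then (G.dist u v : ℝ) else 0

/-- The spectrum of the eccentricity matrix of `G` is symmetric with respect
to the origin: `μ` is an eigenvalue with multiplicity `l` iff `-μ` is. -/
def SpectrumSymm [Fintype V] [DecidableEq V] (G : SimpleGraph V) : Prop :=
  ∀ (hH : (eccMatrix G).IsHermitian) (μ : ℝ),
    {i | hH.eigenvalues i = μ}.ncard = {i | hH.eigenvalues i = -μ}.ncard

/-- A vertex is diametrically distinguished if it lies on some diametrical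
path and is adjacent to some central vertex. -/
noncomputable def DiamDistinguished (G : SimpleGraph V) (u : V) : Prop :=
  (∃ (a b : V) (p : G.Walk a b), p.IsPath ∧ p.length = G.dist a b ∧
      G.dist a b = gdiam G ∧ u ∈ p.support) ∧
  ∃ z ∈ gcenter G, G.Adj u z


section Aux

variable {G : SimpleGraph V}

def ConnOn (G : SimpleGraph V) (A : Set V) : Prop :=
  A.Nonempty ∧ ∀ a ∈ A, ∀ b ∈ A, ∃ p : G.Walk a b, ∀ x ∈ p.support, x ∈ A

lemma reachable_induce_of_walk {A : Set V} :
    ∀ {a b : V} (p : G.Walk a b) (ha : a ∈ A) (hb : b ∈ A),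
      (∀ x ∈ p.support, x ∈ A) → (G.induce A).Reachable ⟨a, ha⟩ ⟨b, hb⟩ := by
  intro a b p
  induction p with
  | nil => intro ha hb _; exact Reachable.refl _
  | @cons u x w h q ih =>
      intro ha hb hs
      have hx : x ∈ A := hs x (by simp)
      have h1 : (G.induce A).Adj ⟨u, ha⟩ ⟨x, hx⟩ := h
      exact (h1.reachable).trans (ih hx hb (fun z hz => hs z (by simp [hz])))

lemma walk_of_induce {A : Set V} {a b : ↥A} (p : (G.induce A).Walk a b) :
    ∃ q : G.Walk a.1 b.1, q.support = p.support.map Subtype.val := by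
  induction p with
  | nil => exact ⟨Walk.nil, by simp⟩
  | @cons u x w h q ih =>
      obtain ⟨q', hq'⟩ := ih
      exact ⟨Walk.cons h q', by exact congrArg (List.cons _) hq'⟩

lemma connOn_iff {A : Set V} : (G.induce A).Connected ↔ ConnOn G A := by
  constructor
  · intro h
    obtain ⟨⟨x, hx⟩⟩ := h.nonempty
    refine ⟨⟨x, hx⟩, fun a ha b hb => ?_⟩
    obtain ⟨p⟩ := h.preconnected ⟨a, ha⟩ ⟨b, hb⟩
    obtain ⟨q, hq⟩ := walk_of_induce p
    refine ⟨q, fun z hz => ?_⟩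
    rw [hq] at hz
    obtain ⟨u, _, rfl⟩ := List.mem_map.mp hz
    exact u.2
  · rintro ⟨⟨x₀, hx₀⟩, h⟩
    have : Nonempty ↥A := ⟨⟨x₀, hx₀⟩⟩
    refine Connected.mk fun a b => ?_
    obtain ⟨p, hp⟩ := h a.1 a.2 b.1 b.2
    simpa using reachable_induce_of_walk p a.2 b.2 hp

noncomputable def induceInduceIso (G : SimpleGraph V) (A : Set V) (C : Set ↥A) :
    (G.induce A).induce C ≃g G.induce (Subtype.val '' C) where
  toEquiv := Equiv.Set.image Subtype.val C Subtype.val_injective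
  map_rel_iff' := Iff.rfl

lemma connected_induce_induce {A : Set V} (C : Set ↥A) :
    ((G.induce A).induce C).Connected ↔ (G.induce (Subtype.val '' C)).Connected :=
  (induceInduceIso G A C).connected_iff

lemma image_compl_singleton {A : Set V} (w : ↥A) :
    (Subtype.val '' ({w}ᶜ : Set ↥A)) = A \ {w.1} := by
  ext x
  constructor
  · rintro ⟨y, hy, rfl⟩
    exact ⟨y.2, fun h => hy (Subtype.ext (by simpa using h))⟩
  · rintro ⟨hxA, hxw⟩
    exact ⟨⟨x, hxA⟩, fun h => hxw (by simpa using congrArg Subtype.val h), rfl⟩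

lemma noCutVtx_iff {B : Set V} :
    (((G.induce B).Connected ∧ ∀ w : ↥B, ((G.induce B).induce {w}ᶜ).Connected)) ↔
      (ConnOn G B ∧ ∀ w ∈ B, ConnOn G (B \ {w})) := by
  rw [connOn_iff]
  constructor
  · rintro ⟨h1, h2⟩
    refine ⟨h1, fun w hw => ?_⟩
    have h3 := h2 ⟨w, hw⟩
    rw [connected_induce_induce, image_compl_singleton] at h3
    exact connOn_iff.mp h3
  · rintro ⟨h1, h2⟩
    refine ⟨h1, fun w => ?_⟩
    rw [connected_induce_induce, image_compl_singleton]
    exact connOn_iff.mpr (h2 w.1 w.2)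


lemma walk_append_support {a m c : V} {X : Set V} (q1 : G.Walk a m) (q2 : G.Walk m c)
    (h1 : ∀ z ∈ q1.support, z ∈ X) (h2 : ∀ z ∈ q2.support, z ∈ X) :
    ∀ z ∈ (q1.append q2).support, z ∈ X := by
  intro z hz
  rw [Walk.support_append] at hz
  rcases List.mem_append.mp hz with h | h
  · exact h1 _ h
  · exact h2 _ (List.mem_of_mem_tail h)

lemma connOn_of_hub {A : Set V} {h0 : V} (hh : h0 ∈ A)
    (H : ∀ a ∈ A, ∃ p : G.Walk a h0, ∀ x ∈ p.support, x ∈ A) : ConnOn G A := by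
  refine ⟨⟨h0, hh⟩, fun a ha b hb => ?_⟩
  obtain ⟨p, hp⟩ := H a ha
  obtain ⟨q, hq⟩ := H b hb
  refine ⟨p.append q.reverse, walk_append_support _ _ hp fun z hz => ?_⟩
  rw [Walk.support_reverse, List.mem_reverse] at hz
  exact hq z hz

lemma end_not_mem_takeUntil {a c : V} {w : G.Walk a c} [DecidableEq V] (hw : w.IsPath) {y : V}
    (hy : y ∈ w.support) (hne : y ≠ c) : c ∉ (w.takeUntil y hy).support := by
  intro hc
  have hnd : ((w.takeUntil y hy).append (w.dropUntil y hy)).support.Nodup := by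
    rw [w.take_spec hy]; exact hw.support_nodup
  rw [Walk.support_append] at hnd
  have hdis := List.disjoint_of_nodup_append hnd
  have hcend : c ∈ (w.dropUntil y hy).support := Walk.end_mem_support _
  rw [Walk.support_eq_cons] at hcend
  rcases List.mem_cons.mp hcend with h | h
  · exact hne h.symm
  · exact hdis hc h

lemma start_not_mem_dropUntil {c b : V} {w : G.Walk c b} [DecidableEq V] (hw : w.IsPath) {y : V}
    (hy : y ∈ w.support) (hne : y ≠ c) : c ∉ (w.dropUntil y hy).support := by
  intro hc
  have hnd : ((w.takeUntil y hy).append (w.dropUntil y hy)).support.Nodup := by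
    rw [w.take_spec hy]; exact hw.support_nodup
  rw [Walk.support_append] at hnd
  have hdis := List.disjoint_of_nodup_append hnd
  have hcstart : c ∈ (w.takeUntil y hy).support := Walk.start_mem_support _
  have hctail : c ∈ (w.dropUntil y hy).support.tail := by
    have := hc
    rw [Walk.support_eq_cons] at this
    rcases List.mem_cons.mp this with h | h
    · exact absurd h.symm hne
    · exact h
  exact hdis hcstart hctail

/-- From any vertex of a path one can walk along the path to one of its
endpoints avoiding any fixed vertex `x` distinct from the start vertex `y`. -/
lemma walk_escape [DecidableEq V] {a b : V} {p : G.Walk a b} (hp : p.IsPath) {y x : V}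
    (hy : y ∈ p.support) (hyx : y ≠ x) :
    ∃ (e : V) (q : G.Walk y e), (e = a ∨ e = b) ∧
      (∀ z ∈ q.support, z ∈ p.support ∧ z ≠ x) := by
  by_cases hx : x ∈ p.support
  · have hy' : y ∈ (p.takeUntil x hx).support ∨ y ∈ (p.dropUntil x hx).support := by
      have := hy
      rw [← p.take_spec hx, Walk.support_append] at this
      rcases List.mem_append.mp this with h | h
      · exact Or.inl h
      · exact Or.inr (List.mem_of_mem_tail h)
    rcases hy' with hyt | hyd
    · -- go back to a
      have ht : (p.takeUntil x hx).IsPath := hp.takeUntil hx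
      refine ⟨a, ((p.takeUntil x hx).takeUntil y hyt).reverse, Or.inl rfl, fun z hz => ?_⟩
      rw [Walk.support_reverse, List.mem_reverse] at hz
      have hz1 : z ∈ (p.takeUntil x hx).support := Walk.support_takeUntil_subset _ _ hz
      refine ⟨Walk.support_takeUntil_subset _ _ hz1, fun hzx => ?_⟩
      subst hzx
      exact end_not_mem_takeUntil ht hyt hyx hz
    · -- go forward to b
      have hd : (p.dropUntil x hx).IsPath := hp.dropUntil hx
      refine ⟨b, (p.dropUntil x hx).dropUntil y hyd, Or.inr rfl, fun z hz => ?_⟩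
      have hz1 : z ∈ (p.dropUntil x hx).support := Walk.support_dropUntil_subset _ _ hz
      refine ⟨Walk.support_dropUntil_subset _ _ hz1, fun hzx => ?_⟩
      subst hzx
      exact start_not_mem_dropUntil hd hyd hyx hz
  · refine ⟨a, (p.takeUntil y hy).reverse, Or.inl rfl, fun z hz => ?_⟩
    rw [Walk.support_reverse, List.mem_reverse] at hz
    have hz1 : z ∈ p.support := Walk.support_takeUntil_subset _ _ hz
    exact ⟨hz1, fun hzx => hx (hzx ▸ hz1)⟩

-- ===== block theory =====

lemma noCutVtx_iff' {B : Set V} :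
    NoCutVtx (G.induce B) ↔ (ConnOn G B ∧ ∀ w ∈ B, ConnOn G (B \ {w})) :=
  noCutVtx_iff

lemma connOn_compl_of_not_cut {v : V} (h : ¬ CutVtx G v) : ConnOn G {v}ᶜ :=
  connOn_iff.mp (not_not.mp h)

/-- walks within a block avoiding any single vertex. -/
lemma block_connOn_diff {B : Set V} (hB : IsBlockSet G B) (w : V) :
    ConnOn G (B \ {w}) := by
  by_cases hw : w ∈ B
  · exact (noCutVtx_iff'.mp hB.1).2 w hw
  · have : B \ {w} = B := by
      ext x; simp only [Set.mem_diff, Set.mem_singleton_iff]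
      exact ⟨fun h => h.1, fun h => ⟨h, fun he => hw (he ▸ h)⟩⟩
    rw [this]; exact (noCutVtx_iff'.mp hB.1).1

lemma block_exists_other {B : Set V} (hB : IsBlockSet G B) {v : V} (hv : v ∈ B) :
    ∃ b, b ∈ B ∧ b ≠ v := by
  obtain ⟨b, hb⟩ := ((noCutVtx_iff'.mp hB.1).2 v hv).1
  exact ⟨b, hb.1, hb.2⟩

lemma exists_block_of_edge [Finite V] {x y : V} (hxy : G.Adj x y) :
    ∃ B : Set V, IsBlockSet G B ∧ x ∈ B ∧ y ∈ B := by
  classical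
  set P : Set V → Prop := fun C => x ∈ C ∧ y ∈ C ∧ NoCutVtx (G.induce C) with hP
  have hxyne := hxy.ne
  have hP0 : P {x, y} := by
    refine ⟨by simp, by simp, noCutVtx_iff'.mpr ⟨⟨⟨x, by simp⟩, ?_⟩, ?_⟩⟩
    · intro a ha b hb
      rcases ha with rfl | rfl <;> rcases hb with rfl | rfl
      · exact ⟨Walk.nil, by simp⟩
      · exact ⟨hxy.toWalk, by intro z hz; simpa using hz⟩
      · exact ⟨hxy.symm.toWalk, by intro z hz; simp at hz; rcases hz with rfl|rfl <;> simp⟩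
      · exact ⟨Walk.nil, by simp⟩
    · intro w hw
      rcases hw with rfl | rfl
      · refine ⟨⟨y, by simp [hxyne.symm]⟩, ?_⟩
        intro a ha b hb
        have ha' : a = y := by
          obtain ⟨h1, h2⟩ := ha
          simp only [Set.mem_insert_iff, Set.mem_singleton_iff] at h1 h2
          tauto
        have hb' : b = y := by
          obtain ⟨h1, h2⟩ := hb
          simp only [Set.mem_insert_iff, Set.mem_singleton_iff] at h1 h2
          tauto
        subst ha'; subst hb'; exact ⟨Walk.nil, by simpa using hb⟩
      · refine ⟨⟨x, by simp [hxyne]⟩, ?_⟩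
        intro a ha b hb
        have ha' : a = x := by
          obtain ⟨h1, h2⟩ := ha
          simp only [Set.mem_insert_iff, Set.mem_singleton_iff] at h1 h2
          tauto
        have hb' : b = x := by
          obtain ⟨h1, h2⟩ := hb
          simp only [Set.mem_insert_iff, Set.mem_singleton_iff] at h1 h2
          tauto
        subst ha'; subst hb'; exact ⟨Walk.nil, by simpa using hb⟩
  obtain ⟨B, hBP, hmax⟩ :=
    Set.Finite.exists_maximalFor id {C | P C} (Set.toFinite _) ⟨{x, y}, hP0⟩
  refine ⟨B, ⟨hBP.2.2, fun C hBC hC => le_antisymm hBC (hmax ⟨hBC hBP.1, hBC hBP.2.1, hC⟩ hBC)⟩, hBP.1, hBP.2.1⟩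

lemma walk_in_mono {a c : V} {X Y : Set V} (q : G.Walk a c) (h : ∀ z ∈ q.support, z ∈ X)
    (hXY : X ⊆ Y) : ∀ z ∈ q.support, z ∈ Y := fun z hz => hXY (h z hz)

lemma block_eq_of_not_cut [DecidableEq V] {B B' : Set V} (hB : IsBlockSet G B)
    (hB' : IsBlockSet G B') {v : V} (hvB : v ∈ B) (hvB' : v ∈ B')
    (hv : ¬ CutVtx G v) : B = B' := by
  obtain ⟨b, hbB, hbv⟩ := block_exists_other hB hvB
  obtain ⟨b', hb'B', hb'v⟩ := block_exists_other hB' hvB'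
  have hcon := connOn_compl_of_not_cut hv
  obtain ⟨p0, hp0⟩ := hcon.2 b (by simpa using hbv) b' (by simpa using hb'v)
  have hp : p0.bypass.IsPath := Walk.bypass_isPath p0
  set p := p0.bypass with hpdef
  have hpv : ∀ z ∈ p.support, z ≠ v := fun z hz => by
    simpa using hp0 z (Walk.support_bypass_subset _ hz)
  set U : Set V := (B ∪ B') ∪ {x | x ∈ p.support} with hUdef
  have hBU : B ⊆ U := fun z hz => Or.inl (Or.inl hz)
  have hB'U : B' ⊆ U := fun z hz => Or.inl (Or.inr hz)
  have hsU : {x | x ∈ p.support} ⊆ U := fun z hz => Or.inr hz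
  have hconB := (noCutVtx_iff'.mp hB.1).1
  have hconB' := (noCutVtx_iff'.mp hB'.1).1
  have hbp : b ∈ p.support := Walk.start_mem_support _
  have hb'p : b' ∈ p.support := Walk.end_mem_support _
  -- ConnOn U
  have hUconn : ConnOn G U := by
    refine connOn_of_hub (hBU hvB) fun a ha => ?_
    rcases ha with (haB | haB') | hap
    · obtain ⟨q, hq⟩ := hconB.2 a haB v hvB
      exact ⟨q, walk_in_mono q hq hBU⟩
    · obtain ⟨q, hq⟩ := hconB'.2 a haB' v hvB'
      exact ⟨q, walk_in_mono q hq hB'U⟩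
    · obtain ⟨q, hq⟩ := hconB.2 b hbB v hvB
      refine ⟨((p.takeUntil a hap).reverse).append q, walk_append_support _ _ ?_
        (walk_in_mono q hq hBU)⟩
      intro z hz
      rw [Walk.support_reverse, List.mem_reverse] at hz
      exact hsU (Walk.support_takeUntil_subset _ _ hz)
  -- ConnOn (U \ {w}) for all w ∈ U
  have hUdel : ∀ w ∈ U, ConnOn G (U \ {w}) := by
    intro w hw
    by_cases hwv : w = v
    · subst hwv
      refine connOn_of_hub (h0 := b') ⟨hB'U hb'B', by simpa using hb'v⟩ fun a ha => ?_
      obtain ⟨haU, hav⟩ := ha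
      have hav' : a ≠ w := by simpa using hav
      rcases haU with (haB | haB') | hap
      · obtain ⟨q, hq⟩ := (block_connOn_diff hB w).2 a ⟨haB, hav⟩ b ⟨hbB, by simpa using hbv⟩
        refine ⟨q.append p, walk_append_support _ _ ?_ ?_⟩
        · exact fun z hz => ⟨hBU (hq z hz).1, (hq z hz).2⟩
        · exact fun z hz => ⟨hsU hz, by simpa using hpv z hz⟩
      · obtain ⟨q, hq⟩ := (block_connOn_diff hB' w).2 a ⟨haB', hav⟩ b' ⟨hb'B', by simpa using hb'v⟩
        exact ⟨q, fun z hz => ⟨hB'U (hq z hz).1, (hq z hz).2⟩⟩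
      · refine ⟨p.dropUntil a hap, fun z hz => ?_⟩
        have hz' : z ∈ p.support := Walk.support_dropUntil_subset _ _ hz
        exact ⟨hsU hz', by simpa using hpv z hz'⟩
    · have hvw : v ∈ U \ {w} := ⟨hBU hvB, by simpa using Ne.symm hwv⟩
      refine connOn_of_hub hvw fun a ha => ?_
      obtain ⟨haU, haw⟩ := ha
      have haw' : a ≠ w := by simpa using haw
      have tohub : ∀ e, e ∈ B ∪ B' → e ≠ w → ∃ q : G.Walk e v,
          ∀ z ∈ q.support, z ∈ U \ {w} := by
        intro e he hew
        rcases he with heB | heB'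
        · obtain ⟨q, hq⟩ := (block_connOn_diff hB w).2 e ⟨heB, hew⟩ v ⟨hvB, hwv ∘ Eq.symm⟩
          exact ⟨q, fun z hz => ⟨hBU (hq z hz).1, (hq z hz).2⟩⟩
        · obtain ⟨q, hq⟩ := (block_connOn_diff hB' w).2 e ⟨heB', hew⟩ v ⟨hvB', hwv ∘ Eq.symm⟩
          exact ⟨q, fun z hz => ⟨hB'U (hq z hz).1, (hq z hz).2⟩⟩
      rcases haU with haBB' | hap
      · obtain ⟨q, hq⟩ := tohub a haBB' haw'
        exact ⟨q, hq⟩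
      · obtain ⟨e, q, he, hqsup⟩ := walk_escape hp hap haw'
        have hew : e ≠ w := (hqsup e (Walk.end_mem_support _)).2
        have heBB' : e ∈ B ∪ B' := by
          rcases he with rfl | rfl
          · exact Or.inl hbB
          · exact Or.inr hb'B'
        obtain ⟨q2, hq2⟩ := tohub e heBB' hew
        refine ⟨q.append q2, walk_append_support _ _ ?_ hq2⟩
        exact fun z hz => ⟨hsU (hqsup z hz).1, by simpa using (hqsup z hz).2⟩
  have hUncv : NoCutVtx (G.induce U) := noCutVtx_iff'.mpr ⟨hUconn, hUdel⟩
  have h1 : B = U := hB.2 U hBU hUncv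
  have h2 : B' = U := hB'.2 U hB'U hUncv
  rw [h1, h2]

/-- A block admits no "ear": a nontrivial path between two of its vertices whose
interior avoids the block. -/
lemma no_ear [DecidableEq V] {B : Set V} (hB : IsBlockSet G B) {e1 e2 : V}
    (he1 : e1 ∈ B) (he2 : e2 ∈ B) (hne : e1 ≠ e2) (p : G.Walk e1 e2) (hp : p.IsPath)
    (hmid : ∀ z ∈ p.support, z ∈ B → z = e1 ∨ z = e2)
    (hout : ∃ z ∈ p.support, z ∉ B) : False := by
  set U : Set V := B ∪ {x | x ∈ p.support} with hUdef
  have hBU : B ⊆ U := fun z hz => Or.inl hz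
  have hsU : {x | x ∈ p.support} ⊆ U := fun z hz => Or.inr hz
  have hconB := (noCutVtx_iff'.mp hB.1).1
  have hUconn : ConnOn G U := by
    refine connOn_of_hub (hBU he1) fun a ha => ?_
    rcases ha with haB | hap
    · obtain ⟨q, hq⟩ := hconB.2 a haB e1 he1
      exact ⟨q, walk_in_mono q hq hBU⟩
    · refine ⟨(p.takeUntil a hap).reverse, fun z hz => ?_⟩
      rw [Walk.support_reverse, List.mem_reverse] at hz
      exact hsU (Walk.support_takeUntil_subset _ _ hz)
  have hUdel : ∀ w ∈ U, ConnOn G (U \ {w}) := by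
    intro w hw
    set h0 : V := if w = e1 then e2 else e1 with hh0
    have hh0B : h0 ∈ B := by
      rw [hh0]; split <;> assumption
    have hh0w : h0 ≠ w := by
      rw [hh0]; split
      · next h => rw [h]; exact hne.symm
      · next h => exact fun hc => h hc.symm
    have tohub : ∀ e, e ∈ B → e ≠ w → ∃ q : G.Walk e h0,
        ∀ z ∈ q.support, z ∈ U \ {w} := by
      intro e he hew
      obtain ⟨q, hq⟩ := (block_connOn_diff hB w).2 e ⟨he, hew⟩ h0 ⟨hh0B, hh0w⟩
      exact ⟨q, fun z hz => ⟨hBU (hq z hz).1, (hq z hz).2⟩⟩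
    refine connOn_of_hub ⟨hBU hh0B, hh0w⟩ fun a ha => ?_
    obtain ⟨haU, haw⟩ := ha
    have haw' : a ≠ w := by simpa using haw
    rcases haU with haB | hap
    · exact tohub a haB haw'
    · obtain ⟨e, q, he, hqsup⟩ := walk_escape hp hap haw'
      have hew : e ≠ w := (hqsup e (Walk.end_mem_support _)).2
      have heB : e ∈ B := by
        rcases he with rfl | rfl
        · exact he1
        · exact he2
      obtain ⟨q2, hq2⟩ := tohub e heB hew
      refine ⟨q.append q2, walk_append_support _ _ ?_ hq2⟩
      exact fun z hz => ⟨hsU (hqsup z hz).1, (hqsup z hz).2⟩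
  have hUncv : NoCutVtx (G.induce U) := noCutVtx_iff'.mpr ⟨hUconn, hUdel⟩
  obtain ⟨z, hzp, hzB⟩ := hout
  exact hzB ((hB.2 U hBU hUncv) ▸ hsU hzp)

lemma cross_edge {B : Set V} : ∀ {a c : V} (q : G.Walk a c), a ∈ B → c ∉ B →
    ∃ u w, G.Adj u w ∧ u ∈ B ∧ w ∉ B := by
  intro a c q
  induction q with
  | nil => exact fun h1 h2 => absurd h1 h2
  | @cons u x w h q ih =>
      intro h1 h2
      by_cases hm : x ∈ B
      · exact ih hm h2
      · exact ⟨u, x, h, h1, hm⟩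

lemma block_has_cut [Finite V] [DecidableEq V] (hGc : G.Connected) {B : Set V}
    (hB : IsBlockSet G B) (hex : ∃ x, x ∉ B) : ∃ c, c ∈ B ∧ CutVtx G c := by
  by_contra hcon
  push_neg at hcon
  obtain ⟨x, hx⟩ := hex
  obtain ⟨v0, hv0⟩ := (noCutVtx_iff'.mp hB.1).1.1
  obtain ⟨p⟩ := hGc.preconnected v0 x
  obtain ⟨u, w, huw, huB, hwB⟩ := cross_edge p hv0 hx
  obtain ⟨B'', hB'', hu, hw⟩ := exists_block_of_edge huw
  have heq := block_eq_of_not_cut hB hB'' huB hu (hcon u huB)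
  exact hwB (heq ▸ hw)

-- ===== eccentricity toolkit =====

section EccTools

variable {W : Type*} [Finite W] {H : SimpleGraph W}

lemma dist_le_ecc (v u : W) : H.dist v u ≤ ecc H v :=
  le_csSup (Set.finite_range _).bddAbove ⟨u, rfl⟩

lemma ecc_le {v : W} {m : ℕ} (h : ∀ u, H.dist v u ≤ m) : ecc H v ≤ m := by
  have : Nonempty W := ⟨v⟩
  exact csSup_le (Set.range_nonempty _) (by rintro _ ⟨u, rfl⟩; exact h u)

lemma exists_ecc (v : W) : ∃ u, H.dist v u = ecc H v := by
  have hne : (Set.range (H.dist v)).Nonempty := ⟨_, ⟨v, rfl⟩⟩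
  exact Nat.sSup_mem hne (Set.finite_range _).bddAbove

lemma radius_le_ecc (v : W) : gradius H ≤ ecc H v := Nat.sInf_le ⟨v, rfl⟩

lemma center_of_le {v : W} (h : ecc H v ≤ gradius H) : v ∈ gcenter H :=
  le_antisymm h (radius_le_ecc v)

lemma ecc_eq_of_center {v : W} (h : v ∈ gcenter H) : ecc H v = gradius H := h

lemma two_le_dist (hH : H.Connected) {u v : W} (hne : u ≠ v) (hnadj : ¬ H.Adj u v) :
    2 ≤ H.dist u v := by
  have h0 : H.dist u v ≠ 0 := fun h => hne (hH.dist_eq_zero_iff.mp h)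
  have h1 : H.dist u v ≠ 1 := fun h => hnadj (dist_eq_one_iff_adj.mp h)
  omega

lemma exists_path_dist [DecidableEq W] (hH : H.Connected) (v u : W) :
    ∃ p : H.Walk v u, p.IsPath ∧ p.length = H.dist v u := by
  obtain ⟨p0, hp0⟩ := (hH.preconnected v u).exists_walk_length_eq_dist
  exact ⟨p0.bypass, Walk.bypass_isPath _,
    le_antisymm (hp0 ▸ Walk.length_bypass_le _) (dist_le _)⟩

lemma eq_or_adj_of_dist_le_one (hH : H.Connected) {z u : W} (h : H.dist z u ≤ 1) :
    u = z ∨ H.Adj z u := by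
  rcases Nat.le_one_iff_eq_zero_or_eq_one.mp h with h0 | h1
  · exact Or.inl (hH.dist_eq_zero_iff.mp h0).symm
  · exact Or.inr (dist_eq_one_iff_adj.mp h1)

lemma dist_split_at [DecidableEq W] (hH : H.Connected) {v u m : W}
    (hm : ∀ w : H.Walk v u, m ∈ w.support) :
    H.dist v m + H.dist m u ≤ H.dist v u := by
  obtain ⟨p, hp⟩ := (hH.preconnected v u).exists_walk_length_eq_dist
  have hmp := hm p
  have h1 : H.dist v m ≤ (p.takeUntil m hmp).length := dist_le _
  have h2 : H.dist m u ≤ (p.dropUntil m hmp).length := dist_le _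
  have h3 : (p.takeUntil m hmp).length + (p.dropUntil m hmp).length = p.length := by
    rw [← Walk.length_append, p.take_spec]
  omega

lemma mem_support_of_closed {K : Set W} {c : W}
    (hcl : ∀ x ∈ K, ∀ y, H.Adj x y → y ≠ c → y ∈ K) :
    ∀ {a b : W} (p : H.Walk a b), a ∈ K → c ∉ p.support → b ∈ K := by
  intro a b p
  induction p with
  | nil => exact fun h _ => h
  | @cons u x w h q ih =>
      intro ha hc
      have hxc : x ≠ c := by
        intro he
        refine hc ?_
        rw [Walk.support_cons]
        exact List.mem_cons_of_mem _ (he ▸ Walk.start_mem_support q)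
      refine ih (hcl _ ha _ h hxc) fun hin => hc ?_
      rw [Walk.support_cons]
      exact List.mem_cons_of_mem _ hin

lemma dist_through [DecidableEq W] (hH : H.Connected) {K : Set W} {c z u : W}
    (hzK : z ∈ K) (hcK : c ∉ K)
    (hcl : ∀ x ∈ K, ∀ y, H.Adj x y → y ≠ c → y ∈ K) (hu : u ∉ K) :
    H.dist c u + 1 ≤ H.dist z u := by
  obtain ⟨p, hp⟩ := (hH.preconnected z u).exists_walk_length_eq_dist
  have hc : c ∈ p.support := by
    by_contra hcc
    exact hu (mem_support_of_closed hcl p hzK hcc)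
  have h2 : H.dist c u ≤ (p.dropUntil c hc).length := dist_le _
  have h3 : (p.takeUntil c hc).length + (p.dropUntil c hc).length = p.length := by
    rw [← Walk.length_append, p.take_spec]
  have h4 : 1 ≤ (p.takeUntil c hc).length := by
    rcases Nat.eq_zero_or_pos (p.takeUntil c hc).length with h | h
    · exact absurd (Walk.eq_of_length_eq_zero h ▸ hzK : c ∈ K) hcK
    · exact h
  omega

end EccTools

-- ===== class B layer =====

lemma compBipOn_symm {B V1 V2 : Set V} (h : CompBipOn G B V1 V2) : CompBipOn G B V2 V1 :=
  ⟨h.2.1, h.1, h.2.2.1.symm, by rw [Set.union_comm]; exact h.2.2.2.1,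
    fun x hx y hy => (h.2.2.2.2 x hx y hy).trans or_comm⟩

lemma bip_mem_B_left {B V1 V2 : Set V} (h : CompBipOn G B V1 V2) {x : V} (hx : x ∈ V1) :
    x ∈ B := h.2.2.2.1 ▸ Or.inl hx

lemma bip_mem_B_right {B V1 V2 : Set V} (h : CompBipOn G B V1 V2) {x : V} (hx : x ∈ V2) :
    x ∈ B := h.2.2.2.1 ▸ Or.inr hx

lemma bip_adj {B V1 V2 : Set V} (h : CompBipOn G B V1 V2) {x y : V}
    (hx : x ∈ V1) (hy : y ∈ V2) : G.Adj x y :=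
  (h.2.2.2.2 x (bip_mem_B_left h hx) y (bip_mem_B_right h hy)).mpr (Or.inl ⟨hx, hy⟩)

lemma bip_not_adj {B V1 V2 : Set V} (h : CompBipOn G B V1 V2) {x y : V}
    (hx : x ∈ V1) (hy : y ∈ V1) : ¬ G.Adj x y := by
  intro hadj
  rcases (h.2.2.2.2 x (bip_mem_B_left h hx) y (bip_mem_B_left h hy)).mp hadj with
    ⟨_, h2⟩ | ⟨h1, _⟩
  · exact Set.disjoint_left.mp h.2.2.1 hy h2
  · exact Set.disjoint_left.mp h.2.2.1 hx h1

lemma bip_mem_or {B V1 V2 : Set V} (h : CompBipOn G B V1 V2) {x : V} (hx : x ∈ B) :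
    x ∈ V1 ∨ x ∈ V2 := by rw [← h.2.2.2.1] at hx; exact hx

lemma bip_adj_mem_right {B V1 V2 : Set V} (h : CompBipOn G B V1 V2) {x y : V}
    (hx : x ∈ V1) (hyB : y ∈ B) (hadj : G.Adj x y) : y ∈ V2 := by
  rcases bip_mem_or h hyB with hy | hy
  · exact absurd hadj (bip_not_adj h hx hy)
  · exact hy

section ClassBLayer

variable [Fintype V] [DecidableEq V] {G : SimpleGraph V} {S : Set V}
variable (hG : ClassB G) (hS : AssocSet G S)
include hG hS

lemma second_block {B : Set V} (hB : IsBlockSet G B) : ∃ x, x ∉ B := by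
  obtain ⟨B1, B2, h1, h2, h12⟩ := hG.2.1
  have hex : ∃ B', IsBlockSet G B' ∧ B' ≠ B := by
    by_cases h : B1 = B
    · exact ⟨B2, h2, fun hc => h12 (by rw [h, hc])⟩
    · exact ⟨B1, h1, h⟩
  obtain ⟨B', hB', hne⟩ := hex
  by_contra h
  push_neg at h
  exact hne (hB'.2 B (fun x _ => h x) hB.1)

lemma block_cut_card {B : Set V} (hB : IsBlockSet G B) :
    1 ≤ (B ∩ cutSet G).ncard ∧ (B ∩ cutSet G).ncard ≤ 2 := by
  refine ⟨?_, hG.2.2 B hB⟩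
  obtain ⟨c, hcB, hcc⟩ := block_has_cut hG.1.1 hB (second_block hG hS hB)
  exact (Set.ncard_pos (Set.toFinite _)).mpr ⟨c, hcB, hcc⟩

lemma cut_mem_S {c : V} (h : CutVtx G c) : c ∈ S := hS.1 c h

lemma nbrs_in_block {B : Set V} (hB : IsBlockSet G B) {v : V} (hv : v ∈ B)
    (hnc : ¬ CutVtx G v) {y : V} (hadj : G.Adj v y) : y ∈ B := by
  obtain ⟨B'', hB'', hv'', hy''⟩ := exists_block_of_edge hadj
  exact (block_eq_of_not_cut hB hB'' hv hv'' hnc).symm ▸ hy''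

lemma bip_cut_split {B V1 V2 : Set V} (hbp : CompBipOn G B V1 V2) :
    B ∩ cutSet G = (V1 ∩ cutSet G) ∪ (V2 ∩ cutSet G) := by
  rw [← hbp.2.2.2.1, Set.union_inter_distrib_right]

lemma bip_cut_ncard_split {B V1 V2 : Set V} (hbp : CompBipOn G B V1 V2) :
    (B ∩ cutSet G).ncard = (V1 ∩ cutSet G).ncard + (V2 ∩ cutSet G).ncard := by
  rw [bip_cut_split hG hS hbp]
  exact Set.ncard_union_eq
    (Set.disjoint_of_subset Set.inter_subset_left Set.inter_subset_left hbp.2.2.1)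
    (Set.toFinite _) (Set.toFinite _)

lemma exists_S_opp {B V1 V2 : Set V} (hB : IsBlockSet G B) (hbp : CompBipOn G B V1 V2)
    {s y : V} (hsV : s ∈ V1) (hyV : y ∈ V1) (hsy : s ≠ y) :
    ∃ m, m ∈ S ∧ m ∈ V2 := by
  have hVne1 : V1.ncard ≠ 1 := by
    intro h
    obtain ⟨a, ha⟩ := Set.ncard_eq_one.mp h
    rw [ha] at hsV hyV
    exact hsy (hsV.trans hyV.symm)
  have hSrule := (hS.2 B V1 V2 hB hbp).2 (fun h => hVne1 h.1)
  by_cases h2 : (V2 ∩ cutSet G).Nonempty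
  · obtain ⟨m, hm1, hm2⟩ := h2
    exact ⟨m, cut_mem_S hG hS hm2, hm1⟩
  · have h2e : V2 ∩ cutSet G = ∅ := Set.not_nonempty_iff_eq_empty.mp h2
    have hkeq : (B ∩ cutSet G).ncard = (V1 ∩ cutSet G).ncard := by
      rw [bip_cut_ncard_split hG hS hbp, h2e]
      simp
    have hk := block_cut_card hG hS hB
    have hcase : (B ∩ cutSet G).ncard = 1 ∨ (B ∩ cutSet G).ncard = 2 := by omega
    rcases hcase with h1 | hh2
    · obtain ⟨m, hm⟩ := Set.ncard_eq_one.mp ((hSrule.1 h1).2)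
      have hmm : m ∈ S ∩ (V2 \ cutSet G) := hm ▸ rfl
      exact ⟨m, hmm.1, hmm.2.1⟩
    · have hV1c : (V1 ∩ cutSet G).ncard = 2 := by omega
      obtain ⟨m, hm⟩ := Set.ncard_eq_one.mp (((hSrule.2 hh2).1 hV1c).1)
      have hmm : m ∈ S ∩ (V2 \ cutSet G) := hm ▸ rfl
      exact ⟨m, hmm.1, hmm.2.1⟩

lemma reach_in_block {B : Set V} (hB : IsBlockSet G B) {s y : V}
    (hsS : s ∈ S) (hsB : s ∈ B) (hyS : y ∈ S) (hyB : y ∈ B) :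
    (G.induce S).Reachable ⟨s, hsS⟩ ⟨y, hyS⟩ := by
  obtain ⟨V1, V2, hbp⟩ := hG.1.2 B hB
  by_cases heq : s = y
  · subst heq; exact Reachable.refl _
  · have hsame : ∀ (W1 W2 : Set V), CompBipOn G B W1 W2 → s ∈ W1 → y ∈ W1 →
        (G.induce S).Reachable ⟨s, hsS⟩ ⟨y, hyS⟩ := by
      intro W1 W2 hbp' hs hy
      obtain ⟨m, hmS, hmW2⟩ := exists_S_opp hG hS hB hbp' hs hy heq
      have h1 : (G.induce S).Adj ⟨s, hsS⟩ ⟨m, hmS⟩ := bip_adj hbp' hs hmW2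
      have h2 : (G.induce S).Adj ⟨y, hyS⟩ ⟨m, hmS⟩ := bip_adj hbp' hy hmW2
      exact h1.reachable.trans h2.reachable.symm
    rcases bip_mem_or hbp hsB with hs | hs <;> rcases bip_mem_or hbp hyB with hy | hy
    · exact hsame V1 V2 hbp hs hy
    · exact Adj.reachable (show (G.induce S).Adj ⟨s, hsS⟩ ⟨y, hyS⟩ from bip_adj hbp hs hy)
    · exact (Adj.reachable (show (G.induce S).Adj ⟨y, hyS⟩ ⟨s, hsS⟩ from
        bip_adj hbp hy hs)).symm
    · exact hsame V2 V1 (compBipOn_symm hbp) hs hy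

lemma T_reach : ∀ (n : ℕ) (s t : V) (hs : s ∈ S) (ht : t ∈ S), G.dist s t ≤ n →
    (G.induce S).Reachable ⟨s, hs⟩ ⟨t, ht⟩ := by
  intro n
  induction n with
  | zero =>
      intro s t hs ht hd
      have : s = t := hG.1.1.dist_eq_zero_iff.mp (Nat.le_zero.mp hd)
      subst this; exact Reachable.refl _
  | succ n ih =>
      intro s t hs ht hd
      by_cases hst : s = t
      · subst hst; exact Reachable.refl _
      · have hreach : G.Reachable s t := hG.1.1.preconnected s t
        obtain ⟨p, hpl⟩ := hreach.exists_walk_length_eq_dist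
        cases p with
        | nil => exact absurd rfl hst
        | @cons _ x1 _ h q =>
            obtain ⟨B', hB', hsB', hx1B'⟩ := exists_block_of_edge h
            have seg : ∀ (m : ℕ) (x : V), x ∈ B' → ∀ (r : G.Walk x t), r.length ≤ m →
                ∃ y, y ∈ S ∧ y ∈ B' ∧ G.dist y t ≤ r.length := by
              intro m
              induction m with
              | zero =>
                  intro x hxB r hr
                  have hxt : x = t := r.eq_of_length_eq_zero (Nat.le_zero.mp hr)
                  subst hxt
                  exact ⟨x, ht, hxB, by rw [SimpleGraph.dist_self]; exact Nat.zero_le _⟩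
              | succ m ihm =>
                  intro x hxB r hr
                  by_cases hxS : x ∈ S
                  · exact ⟨x, hxS, hxB, dist_le r⟩
                  · have hxnc : ¬ CutVtx G x := fun hcv => hxS (hS.1 x hcv)
                    cases r with
                    | nil => exact absurd ht hxS
                    | @cons _ x2 _ h2 r' =>
                        have hx2B' : x2 ∈ B' := nbrs_in_block hG hS hB' hxB hxnc h2
                        obtain ⟨y, hy1, hy2, hy3⟩ := ihm x2 hx2B' r'
                          (by simpa using Nat.succ_le_succ_iff.mp hr)
                        exact ⟨y, hy1, hy2, le_trans hy3 (by simp)⟩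
            have hql : q.length ≤ n := by
              have : q.length + 1 = G.dist s t := by simpa using hpl
              omega
            obtain ⟨y, hyS, hyB', hyt⟩ := seg q.length x1 hx1B' q le_rfl
            have h1 := reach_in_block hG hS hB' hs hsB' hyS hyB'
            have h2 := ih y t hyS ht (le_trans hyt hql)
            exact h1.trans h2

end ClassBLayer

lemma walk_cons_of_ne {W : Type*} {H : SimpleGraph W} {a b : W} (p : H.Walk a b)
    (hab : a ≠ b) : ∃ (m : W) (h : H.Adj a m) (q : H.Walk m b), p = Walk.cons h q := by
  cases p with
  | nil => exact absurd rfl hab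
  | cons h q => exact ⟨_, h, q, rfl⟩

section Main

variable [Fintype V] [DecidableEq V] {G : SimpleGraph V} {S : Set V}
variable (hG : ClassB G) (hS : AssocSet G S) {z1 z2 : ↥S}
variable (hne : z1 ≠ z2) (hc : gcenter (G.induce S) = {z1, z2})
variable (hz1 : ¬ CutVtx G z1.1) (hz2 : ¬ CutVtx G z2.1)
include hG hS hne hc hz1 hz2

lemma T_connected : (G.induce S).Connected := by
  have : Nonempty ↥S := ⟨z1⟩
  refine Connected.mk fun a b => ?_
  have := T_reach hG hS (G.dist a.1 b.1) a.1 b.1 a.2 b.2 le_rfl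
  exact this

lemma leafpair {B W1 W2 : Set V} (hB : IsBlockSet G B) (hbp : CompBipOn G B W1 W2)
    (hK : ¬ (W1.ncard = 1 ∧ W2.ncard = 1)) {c : V} (hc0 : B ∩ cutSet G = {c})
    (hcW2 : c ∈ W2) {p : V} (hpS : p ∈ S) (hpW1 : p ∈ W1) (hpnc : ¬ CutVtx G p)
    (hpecc : ecc (G.induce S) ⟨p, hpS⟩ = gradius (G.induce S)) : False := by
  have hTconn : (G.induce S).Connected := T_connected hG hS hne hc hz1 hz2
  have hk1 : (B ∩ cutSet G).ncard = 1 := by rw [hc0]; simp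
  have hrule := ((hS.2 B W1 W2 hB hbp).2 hK).1 hk1
  have hcBc : c ∈ B ∩ cutSet G := by rw [hc0]; exact Set.mem_singleton c
  have hccut : CutVtx G c := hcBc.2
  have hcS : c ∈ S := hS.1 c hccut
  have hW1cut : W1 ∩ cutSet G = ∅ := by
    ext x
    simp only [Set.mem_inter_iff, Set.mem_empty_iff_false, iff_false, not_and]
    intro hx1 hx2
    have hxB : x ∈ B ∩ cutSet G := ⟨bip_mem_B_left hbp hx1, hx2⟩
    rw [hc0] at hxB
    exact Set.disjoint_left.mp hbp.2.2.1 (hxB ▸ hx1) hcW2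
  have hpP : p ∈ S ∩ (W1 \ cutSet G) := ⟨hpS, hpW1, hpnc⟩
  have hW1rep : S ∩ (W1 \ cutSet G) = {p} := by
    obtain ⟨a, ha⟩ := Set.ncard_eq_one.mp hrule.1
    rw [ha] at hpP ⊢
    rw [Set.eq_of_mem_singleton hpP]
  obtain ⟨a, haeq⟩ := Set.ncard_eq_one.mp hrule.2
  have haP : a ∈ S ∩ (W2 \ cutSet G) := haeq ▸ Set.mem_singleton a
  obtain ⟨haS, haW2, hanc'⟩ := haP
  have hanc : ¬ CutVtx G a := hanc'
  have hac : a ≠ c := fun h => hanc (h ▸ hccut)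
  have hpc : p ≠ c := fun h => hpnc (h ▸ hccut)
  have hpa : p ≠ a := fun h => Set.disjoint_left.mp hbp.2.2.1 hpW1 (h ▸ haW2)
  have hSW1 : ∀ y, y ∈ S → y ∈ W1 → y = p := by
    intro y hy1 hy2
    by_cases hyc : CutVtx G y
    · exact absurd (show y ∈ (∅ : Set V) by rw [← hW1cut]; exact ⟨hy2, hyc⟩) (Set.notMem_empty y)
    · have hy3 : y ∈ S ∩ (W1 \ cutSet G) := ⟨hy1, hy2, hyc⟩
      rw [hW1rep] at hy3
      exact hy3
  have hSW2 : ∀ y, y ∈ S → y ∈ W2 → y = a ∨ y = c := by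
    intro y hy1 hy2
    by_cases hyc : CutVtx G y
    · right
      have hy3 : y ∈ B ∩ cutSet G := ⟨bip_mem_B_right hbp hy2, hyc⟩
      rw [hc0] at hy3
      exact hy3
    · left
      have hy3 : y ∈ S ∩ (W2 \ cutSet G) := ⟨hy1, hy2, hyc⟩
      rw [haeq] at hy3
      exact hy3
  have hpnbr : ∀ (y : ↥S), (G.induce S).Adj ⟨p, hpS⟩ y → y.1 = a ∨ y.1 = c := by
    intro y hy
    have hyB : y.1 ∈ B := nbrs_in_block hG hS hB (bip_mem_B_left hbp hpW1) hpnc hy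
    exact hSW2 y.1 y.2 (bip_adj_mem_right hbp hpW1 hyB hy)
  have hanbr : ∀ (y : ↥S), (G.induce S).Adj ⟨a, haS⟩ y → y.1 = p := by
    intro y hy
    have hyB : y.1 ∈ B := nbrs_in_block hG hS hB (bip_mem_B_right hbp haW2) hanc hy
    exact hSW1 y.1 y.2 (bip_adj_mem_right (compBipOn_symm hbp) haW2 hyB hy)
  set K : Set ↥S := {⟨p, hpS⟩, ⟨a, haS⟩} with hK2
  have hcl : ∀ x ∈ K, ∀ y, (G.induce S).Adj x y → y ≠ (⟨c, hcS⟩ : ↥S) → y ∈ K := by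
    intro x hx y hxy hyc
    simp only [hK2, Set.mem_insert_iff, Set.mem_singleton_iff] at hx
    rcases hx with rfl | rfl
    · rcases hpnbr y hxy with h | h
      · exact Or.inr (Subtype.ext h)
      · exact absurd (Subtype.ext h) hyc
    · exact Or.inl (Subtype.ext (hanbr y hxy))
  have hcnK : (⟨c, hcS⟩ : ↥S) ∉ K := by
    simp only [hK2, Set.mem_insert_iff, Set.mem_singleton_iff]
    push_neg
    exact ⟨fun h => hpc (congrArg Subtype.val h).symm, fun h => hac (congrArg Subtype.val h).symm⟩
  have hadj_pc : (G.induce S).Adj ⟨p, hpS⟩ ⟨c, hcS⟩ := bip_adj hbp hpW1 hcW2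
  have hadj_pa : (G.induce S).Adj ⟨p, hpS⟩ ⟨a, haS⟩ := bip_adj hbp hpW1 haW2
  have hr1 : 1 ≤ gradius (G.induce S) := by
    have hone : ∃ w : ↥S, w ≠ ⟨p, hpS⟩ := by
      by_cases h : z1 = ⟨p, hpS⟩
      · refine ⟨z2, fun hh => hne ?_⟩
        rw [h, ← hh]
      · exact ⟨z1, h⟩
    obtain ⟨w, hw⟩ := hone
    have h1 := hTconn.pos_dist_of_ne (Ne.symm hw)
    have h2 := dist_le_ecc (H := G.induce S) ⟨p, hpS⟩ w
    rw [hpecc] at h2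
    omega
  rcases Nat.lt_or_ge (gradius (G.induce S)) 2 with hr2 | hr2
  · have hrr : gradius (G.induce S) = 1 := by omega
    have hcover : ∀ u : ↥S, u = ⟨p, hpS⟩ ∨ u = ⟨a, haS⟩ ∨ u = ⟨c, hcS⟩ := by
      intro u
      have hd : (G.induce S).dist ⟨p, hpS⟩ u ≤ 1 := by
        have h3 := dist_le_ecc (H := G.induce S) ⟨p, hpS⟩ u
        rw [hpecc, hrr] at h3
        exact h3
      rcases eq_or_adj_of_dist_le_one hTconn hd with h | h
      · exact Or.inl h
      · rcases hpnbr u h with h2 | h2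
        · exact Or.inr (Or.inl (Subtype.ext h2))
        · exact Or.inr (Or.inr (Subtype.ext h2))
    have hz1cen : ecc (G.induce S) z1 = gradius (G.induce S) :=
      ecc_eq_of_center (by rw [hc]; exact Set.mem_insert _ _)
    have hz2cen : ecc (G.induce S) z2 = gradius (G.induce S) :=
      ecc_eq_of_center (by rw [hc]; exact Set.mem_insert_of_mem _ rfl)
    have hz1c : z1 ≠ (⟨c, hcS⟩ : ↥S) := fun h => hz1 (by rw [h]; exact hccut)
    have hz2c : z2 ≠ (⟨c, hcS⟩ : ↥S) := fun h => hz2 (by rw [h]; exact hccut)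
    have hza : ecc (G.induce S) ⟨a, haS⟩ = gradius (G.induce S) := by
      rcases hcover z1 with h1 | h1 | h1
      · rcases hcover z2 with h2 | h2 | h2
        · exact absurd (h1.trans h2.symm) hne
        · rw [← h2]; exact hz2cen
        · exact absurd h2 hz2c
      · rw [← h1]; exact hz1cen
      · exact absurd h1 hz1c
    have hd2 : 2 ≤ (G.induce S).dist ⟨a, haS⟩ ⟨c, hcS⟩ :=
      two_le_dist hTconn (fun h => hac (congrArg Subtype.val h))
        (fun h => bip_not_adj (compBipOn_symm hbp) haW2 hcW2 h)
    have h3 := dist_le_ecc (H := G.induce S) ⟨a, haS⟩ ⟨c, hcS⟩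
    rw [hza, hrr] at h3
    omega
  · have hecc : ecc (G.induce S) ⟨c, hcS⟩ ≤ gradius (G.induce S) := by
      refine ecc_le fun u => ?_
      by_cases hu : u ∈ K
      · simp only [hK2, Set.mem_insert_iff, Set.mem_singleton_iff] at hu
        rcases hu with rfl | rfl
        · have h4 : (G.induce S).dist ⟨c, hcS⟩ ⟨p, hpS⟩ ≤ 1 := by
            have := dist_le hadj_pc.symm.toWalk
            simpa using this
          omega
        · have t1 : (G.induce S).dist ⟨c, hcS⟩ ⟨p, hpS⟩ ≤ 1 := by
            have := dist_le hadj_pc.symm.toWalk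
            simpa using this
          have t2 : (G.induce S).dist ⟨p, hpS⟩ ⟨a, haS⟩ ≤ 1 := by
            have := dist_le hadj_pa.toWalk
            simpa using this
          have t3 := hTconn.dist_triangle (u := (⟨c, hcS⟩ : ↥S)) (v := ⟨p, hpS⟩)
            (w := ⟨a, haS⟩)
          omega
      · have hth := dist_through hTconn (Set.mem_insert _ _ : (⟨p, hpS⟩ : ↥S) ∈ K) hcnK hcl hu
        have h5 := dist_le_ecc (H := G.induce S) ⟨p, hpS⟩ u
        rw [hpecc] at h5
        omega
    have hcen : (⟨c, hcS⟩ : ↥S) ∈ gcenter (G.induce S) := center_of_le hecc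
    rw [hc] at hcen
    rcases hcen with h | h
    · exact hz1 (by rw [← h]; exact hccut)
    · exact hz2 (by rw [← (Set.eq_of_mem_singleton h)]; exact hccut)

lemma gradius_pos (z : ↥S) (hzecc : ecc (G.induce S) z = gradius (G.induce S)) :
    1 ≤ gradius (G.induce S) := by
  have hTconn : (G.induce S).Connected := T_connected hG hS hne hc hz1 hz2
  have hone : ∃ w : ↥S, w ≠ z := by
    by_cases h : z1 = z
    · refine ⟨z2, fun hh => hne ?_⟩
      rw [h, ← hh]
    · exact ⟨z1, h⟩
  obtain ⟨w, hw⟩ := hone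
  have h1 := hTconn.pos_dist_of_ne (Ne.symm hw)
  have h2 := dist_le_ecc (H := G.induce S) z w
  rw [hzecc] at h2
  omega

lemma center_in_pair {v : ↥S} (hv : ecc (G.induce S) v ≤ gradius (G.induce S)) :
    v = z1 ∨ v = z2 := by
  have hcen : v ∈ gcenter (G.induce S) := center_of_le hv
  rw [hc] at hcen
  rcases hcen with h | h
  · exact Or.inl h
  · exact Or.inr (Set.eq_of_mem_singleton h)

lemma cut_center_contra {c : V} (hcS : c ∈ S) (hccut : CutVtx G c)
    (hv : ecc (G.induce S) ⟨c, hcS⟩ ≤ gradius (G.induce S)) : False := by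
  rcases center_in_pair hG hS hne hc hz1 hz2 hv with h | h
  · exact hz1 (by rw [← h]; exact hccut)
  · exact hz2 (by rw [← h]; exact hccut)

lemma deepcase {B W1 W2 : Set V} (hB : IsBlockSet G B) (hbp : CompBipOn G B W1 W2)
    (hKnot : ¬ (W1.ncard = 1 ∧ W2.ncard = 1)) (hk2 : (B ∩ cutSet G).ncard = 2)
    (hV2c : (W2 ∩ cutSet G).ncard = 2)
    (z : ↥S) (hzW1 : z.1 ∈ W1) (hznc : ¬ CutVtx G z.1)
    (hzecc : ecc (G.induce S) z = gradius (G.induce S)) : False := by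
  have hTconn : (G.induce S).Connected := T_connected hG hS hne hc hz1 hz2
  have hrule := (((hS.2 B W1 W2 hB hbp).2 hKnot).2 hk2).2.1 hV2c
  obtain ⟨c1, c2, hc12, hceq⟩ := Set.ncard_eq_two.mp hV2c
  have hc1m : c1 ∈ W2 ∩ cutSet G := by rw [hceq]; exact Set.mem_insert _ _
  have hc2m : c2 ∈ W2 ∩ cutSet G := by rw [hceq]; exact Set.mem_insert_of_mem _ rfl
  have hc1S : c1 ∈ S := hS.1 c1 hc1m.2
  have hc2S : c2 ∈ S := hS.1 c2 hc2m.2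
  have hW1cut : W1 ∩ cutSet G = ∅ := by
    have hsplit := bip_cut_ncard_split hG hS hbp
    rw [hk2, hV2c] at hsplit
    have h0 : (W1 ∩ cutSet G).ncard = 0 := by omega
    exact (Set.ncard_eq_zero (Set.toFinite _)).mp h0
  have hzP : z.1 ∈ S ∩ (W1 \ cutSet G) := ⟨z.2, hzW1, hznc⟩
  have hW1rep : S ∩ (W1 \ cutSet G) = {z.1} := by
    obtain ⟨a, ha⟩ := Set.ncard_eq_one.mp hrule.1
    rw [ha] at hzP ⊢
    rw [Set.eq_of_mem_singleton hzP]
  have hSW1 : ∀ y, y ∈ S → y ∈ W1 → y = z.1 := by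
    intro y hy1 hy2
    by_cases hyc : CutVtx G y
    · exact absurd (show y ∈ (∅ : Set V) by rw [← hW1cut]; exact ⟨hy2, hyc⟩) (Set.notMem_empty y)
    · have hy3 : y ∈ S ∩ (W1 \ cutSet G) := ⟨hy1, hy2, hyc⟩
      rw [hW1rep] at hy3
      exact hy3
  have hSW2 : ∀ y, y ∈ S → y ∈ W2 → y = c1 ∨ y = c2 := by
    intro y hy1 hy2
    by_cases hyc : CutVtx G y
    · have : y ∈ W2 ∩ cutSet G := ⟨hy2, hyc⟩
      rw [hceq] at this
      exact this
    · have hy3 : y ∈ S ∩ (W2 \ cutSet G) := ⟨hy1, hy2, hyc⟩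
      rw [hrule.2] at hy3
      exact absurd hy3 (Set.notMem_empty y)
  have hznbr : ∀ y : ↥S, (G.induce S).Adj z y → y = ⟨c1, hc1S⟩ ∨ y = ⟨c2, hc2S⟩ := by
    intro y hy
    have hyB : y.1 ∈ B := nbrs_in_block hG hS hB (bip_mem_B_left hbp hzW1) hznc hy
    have hyW2 : y.1 ∈ W2 := bip_adj_mem_right hbp hzW1 hyB hy
    rcases hSW2 y.1 y.2 hyW2 with h | h
    · exact Or.inl (Subtype.ext h)
    · exact Or.inr (Subtype.ext h)
  have hzc1 : z.1 ≠ c1 := fun h => hznc (h ▸ hc1m.2)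
  have hzc2 : z.1 ≠ c2 := fun h => hznc (h ▸ hc2m.2)
  have hadjzc1 : (G.induce S).Adj z ⟨c1, hc1S⟩ := bip_adj hbp hzW1 hc1m.1
  have hadjzc2 : (G.induce S).Adj z ⟨c2, hc2S⟩ := bip_adj hbp hzW1 hc2m.1
  -- the two "sides"
  set A : ↥S → Set ↥S := fun d => {u | ∃ q : (G.induce S).Walk d u, z ∉ q.support} with hA
  have hclA : ∀ d : ↥S, ∀ u ∈ A d, ∀ y, (G.induce S).Adj u y → y ≠ z → y ∈ A d := by
    intro d u hu y huy hyz
    obtain ⟨q, hq⟩ := hu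
    refine ⟨q.concat huy, fun hmem => ?_⟩
    rw [Walk.support_concat, List.mem_append] at hmem
    rcases hmem with h | h
    · exact hq h
    · have hzy : z = y := by simpa using h
      exact hyz hzy.symm
  have hzA : ∀ d : ↥S, z ∉ A d := by
    rintro d ⟨q, hq⟩
    exact hq (Walk.end_mem_support q)
  have hselfA : ∀ (d : ↥S), d ≠ z → d ∈ A d := by
    intro d hd
    exact ⟨Walk.nil, by simpa using Ne.symm hd⟩
  have hcov : ∀ u : ↥S, u ≠ z → u ∈ A ⟨c1, hc1S⟩ ∨ u ∈ A ⟨c2, hc2S⟩ := by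
    intro u hu
    obtain ⟨p0⟩ := hTconn.preconnected z u
    have hp : p0.bypass.IsPath := Walk.bypass_isPath p0
    obtain ⟨m, hadj, q, hpe⟩ := walk_cons_of_ne p0.bypass (Ne.symm hu)
    rw [hpe, Walk.cons_isPath_iff] at hp
    rcases hznbr _ hadj with rfl | rfl
    · exact Or.inl ⟨q, hp.2⟩
    · exact Or.inr ⟨q, hp.2⟩
  have hdisj : ∀ u : ↥S, u ∈ A ⟨c1, hc1S⟩ → u ∈ A ⟨c2, hc2S⟩ → False := by
    intro u hu1 hu2
    obtain ⟨q1, hq1⟩ := hu1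
    obtain ⟨q2, hq2⟩ := hu2
    have hzw : z ∉ (q1.append q2.reverse).support := by
      intro hmem
      rw [Walk.support_append] at hmem
      rcases List.mem_append.mp hmem with h | h
      · exact hq1 h
      · exact hq2 (by
          have := List.mem_of_mem_tail h
          rwa [Walk.support_reverse, List.mem_reverse] at this)
    obtain ⟨q, hqsup⟩ := walk_of_induce (q1.append q2.reverse)
    have hPS : ∀ x ∈ q.bypass.support, x ∈ S ∧ x ≠ z.1 := by
      intro x hx
      have hx' : x ∈ q.support := Walk.support_bypass_subset _ hx
      rw [hqsup] at hx'
      obtain ⟨u', hu', rfl⟩ := List.mem_map.mp hx'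
      refine ⟨u'.2, fun hxe => ?_⟩
      exact hzw (by rwa [show u' = z from Subtype.ext hxe] at hu')
    have hc1B : c1 ∈ B := bip_mem_B_right hbp hc1m.1
    have hc2B : c2 ∈ B := bip_mem_B_right hbp hc2m.1
    have hnadj : ¬ G.Adj c1 c2 := bip_not_adj (compBipOn_symm hbp) hc1m.1 hc2m.1
    have hmid : ∀ x ∈ q.bypass.support, x ∈ B → x = c1 ∨ x = c2 := by
      intro x hx hxB
      obtain ⟨hxS, hxz⟩ := hPS x hx
      rcases bip_mem_or hbp hxB with h | h
      · exact absurd (hSW1 x hxS h) hxz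
      · exact hSW2 x hxS h
    have hout : ∃ x ∈ q.bypass.support, x ∉ B := by
      obtain ⟨m, hadj, rest, hpe⟩ := walk_cons_of_ne q.bypass hc12
      have hmmem : m ∈ q.bypass.support := by
        rw [hpe, Walk.support_cons]
        exact List.mem_cons_of_mem _ (Walk.start_mem_support rest)
      refine ⟨m, hmmem, fun hmB => ?_⟩
      rcases hmid m hmmem hmB with h | h
      · exact hadj.ne h.symm
      · exact hnadj (h ▸ hadj)
    exact no_ear hB hc1B hc2B hc12 q.bypass (Walk.bypass_isPath q) hmid hout
  have hr1 : 1 ≤ gradius (G.induce S) := gradius_pos hG hS hne hc hz1 hz2 z hzecc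
  have hmain : ∀ ca cb : ↥S, ca.1 ∈ cutSet G →
      (G.induce S).Adj z ca → (G.induce S).Adj z cb →
      (∀ y : ↥S, (G.induce S).Adj z y → y = ca ∨ y = cb) →
      (∀ u : ↥S, u ∈ A ca → u ∈ A cb → False) →
      (∀ u : ↥S, u ≠ z → u ∈ A ca ∨ u ∈ A cb) →
      ∀ u0 : ↥S, u0 ∈ A ca → (G.induce S).dist z u0 = gradius (G.induce S) →
      False := by
    intro ca cb hcacut hadjca hadjcb hnb hdisj' hcov' u0 hu0A hu0d
    by_cases hdeep : ∃ u2 ∈ A cb, (G.induce S).dist z u2 = gradius (G.induce S)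
    · obtain ⟨u2, hu2A, hu2d⟩ := hdeep
      have huniq : ∀ v : ↥S, ecc (G.induce S) v = gradius (G.induce S) → v = z := by
        intro v hv
        by_contra hvz
        rcases hcov' v hvz with hvA | hvB
        · have hpass : ∀ w : (G.induce S).Walk v u2, z ∈ w.support := by
            intro w
            by_contra hzw
            obtain ⟨qv, hqv⟩ := hvA
            refine hdisj' u2 ⟨qv.append w, ?_⟩ hu2A
            intro hmem
            rw [Walk.support_append] at hmem
            rcases List.mem_append.mp hmem with h | h
            · exact hqv h
            · exact hzw (List.mem_of_mem_tail h)
          have hsplit := dist_split_at hTconn hpass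
          have h1 := hTconn.pos_dist_of_ne hvz
          have h2 := dist_le_ecc (H := G.induce S) v u2
          rw [hv] at h2
          rw [hu2d] at hsplit
          omega
        · have hpass : ∀ w : (G.induce S).Walk v u0, z ∈ w.support := by
            intro w
            by_contra hzw
            obtain ⟨qv, hqv⟩ := hvB
            refine hdisj' u0 hu0A ⟨qv.append w, ?_⟩
            intro hmem
            rw [Walk.support_append] at hmem
            rcases List.mem_append.mp hmem with h | h
            · exact hqv h
            · exact hzw (List.mem_of_mem_tail h)
          have hsplit := dist_split_at hTconn hpass
          have h1 := hTconn.pos_dist_of_ne hvz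
          have h2 := dist_le_ecc (H := G.induce S) v u0
          rw [hv] at h2
          rw [hu0d] at hsplit
          omega
      have e1 := huniq z1 (ecc_eq_of_center (by rw [hc]; exact Set.mem_insert _ _))
      have e2 := huniq z2 (ecc_eq_of_center (by rw [hc]; exact Set.mem_insert_of_mem _ rfl))
      exact hne (e1.trans e2.symm)
    · push_neg at hdeep
      have hecc : ecc (G.induce S) ca ≤ gradius (G.induce S) := by
        refine ecc_le fun u => ?_
        have hdzu := dist_le_ecc (H := G.induce S) z u
        rw [hzecc] at hdzu
        have hdcaz : (G.induce S).dist ca z ≤ 1 := by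
          have := dist_le hadjca.symm.toWalk
          simpa using this
        by_cases huz : u = z
        · subst huz
          omega
        · rcases hcov' u huz with huA | huB
          · obtain ⟨P, hPpath, hPlen⟩ := exists_path_dist hTconn z u
            obtain ⟨m, hadjm, q, hpe⟩ := walk_cons_of_ne P (Ne.symm huz)
            rw [hpe, Walk.cons_isPath_iff] at hPpath
            have hqlen : q.length + 1 = (G.induce S).dist z u := by
              rw [← hPlen, hpe]
              simp
            rcases hnb m hadjm with rfl | rfl
            · have hd1 : (G.induce S).dist m u ≤ q.length := dist_le q
              omega
            · exact absurd (⟨q, hPpath.2⟩ : u ∈ A m) fun hxx => hdisj' u huA hxx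
          · have hne2 := hdeep u huB
            have htri := hTconn.dist_triangle (u := ca) (v := z) (w := u)
            omega
      exact cut_center_contra hG hS hne hc hz1 hz2 ca.2 hcacut hecc
  obtain ⟨u0, hu0⟩ := exists_ecc (H := G.induce S) z
  rw [hzecc] at hu0
  have hu0z : u0 ≠ z := by
    intro h
    rw [h, SimpleGraph.dist_self] at hu0
    omega
  rcases hcov u0 hu0z with h | h
  · exact hmain ⟨c1, hc1S⟩ ⟨c2, hc2S⟩ hc1m.2 hadjzc1 hadjzc2 hznbr hdisj hcov u0 h hu0
  · exact hmain ⟨c2, hc2S⟩ ⟨c1, hc1S⟩ hc2m.2 hadjzc2 hadjzc1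
      (fun y hy => (hznbr y hy).symm) (fun u h1 h2 => hdisj u h2 h1)
      (fun u hu => (hcov u hu).symm) u0 h hu0

lemma center_noncut_false (z : ↥S) (hzecc : ecc (G.induce S) z = gradius (G.induce S))
    (hznc : ¬ CutVtx G z.1) : False := by
  have hTconn : (G.induce S).Connected := T_connected hG hS hne hc hz1 hz2
  have hr1 : 1 ≤ gradius (G.induce S) := gradius_pos hG hS hne hc hz1 hz2 z hzecc
  have hone : ∃ w : ↥S, w ≠ z := by
    by_cases h : z1 = z
    · exact ⟨z2, fun hh => hne (by rw [h, ← hh])⟩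
    · exact ⟨z1, h⟩
  obtain ⟨w, hwz⟩ := hone
  obtain ⟨pw⟩ := hG.1.1.preconnected z.1 w.1
  have hvne : z.1 ≠ w.1 := fun h => hwz (Subtype.ext h.symm)
  obtain ⟨x0, hx0, -, -⟩ := walk_cons_of_ne pw hvne
  obtain ⟨B, hB, hzB, -⟩ := exists_block_of_edge hx0
  obtain ⟨V1, V2, hbp0⟩ := hG.1.2 B hB
  have inner : ∀ (W1 W2 : Set V), CompBipOn G B W1 W2 → z.1 ∈ W1 → False := by
    intro W1 W2 hbp hzW1
    by_cases hK : W1.ncard = 1 ∧ W2.ncard = 1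
    · obtain ⟨c, hcB, hccut⟩ := block_has_cut hG.1.1 hB (second_block hG hS hB)
      have hcz : c ≠ z.1 := fun h => hznc (h ▸ hccut)
      have hcW2 : c ∈ W2 := by
        rcases bip_mem_or hbp hcB with h | h
        · obtain ⟨w1, hw1⟩ := Set.ncard_eq_one.mp hK.1
          rw [hw1] at h hzW1
          exact absurd ((Set.eq_of_mem_singleton h).trans
            (Set.eq_of_mem_singleton hzW1).symm) hcz
        · exact h
      have hcS : c ∈ S := hS.1 c hccut
      have hznbr : ∀ y : ↥S, (G.induce S).Adj z y → y = ⟨c, hcS⟩ := by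
        intro y hy
        have hyB : y.1 ∈ B := nbrs_in_block hG hS hB hzB hznc hy
        have hyW2 : y.1 ∈ W2 := bip_adj_mem_right hbp hzW1 hyB hy
        obtain ⟨w2, hw2⟩ := Set.ncard_eq_one.mp hK.2
        rw [hw2] at hyW2 hcW2
        exact Subtype.ext ((Set.eq_of_mem_singleton hyW2).trans
          (Set.eq_of_mem_singleton hcW2).symm)
      have hcl : ∀ x ∈ ({z} : Set ↥S), ∀ y, (G.induce S).Adj x y →
          y ≠ ⟨c, hcS⟩ → y ∈ ({z} : Set ↥S) := by
        intro x hx y hxy hyc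
        rw [Set.eq_of_mem_singleton hx] at hxy
        exact absurd (hznbr y hxy) hyc
      have hcnK : (⟨c, hcS⟩ : ↥S) ∉ ({z} : Set ↥S) := fun h =>
        hcz (congrArg Subtype.val (Set.eq_of_mem_singleton h))
      have hadjzc : (G.induce S).Adj z ⟨c, hcS⟩ := bip_adj hbp hzW1 hcW2
      have hecc : ecc (G.induce S) ⟨c, hcS⟩ ≤ gradius (G.induce S) := by
        refine ecc_le fun u => ?_
        by_cases hu : u = z
        · subst hu
          have h2 : (G.induce S).dist ⟨c, hcS⟩ u ≤ 1 := by
            have := dist_le hadjzc.symm.toWalk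
            simpa using this
          omega
        · have hth := dist_through hTconn (Set.mem_singleton z) hcnK hcl (by simpa using hu)
          have h5 := dist_le_ecc (H := G.induce S) z u
          rw [hzecc] at h5
          omega
      exact cut_center_contra hG hS hne hc hz1 hz2 hcS hccut hecc
    · have hkb := block_cut_card hG hS hB
      have hkc : (B ∩ cutSet G).ncard = 1 ∨ (B ∩ cutSet G).ncard = 2 := by omega
      rcases hkc with hk1 | hk2
      · obtain ⟨c, hc0⟩ := Set.ncard_eq_one.mp hk1
        have hcBc : c ∈ B ∩ cutSet G := by rw [hc0]; exact Set.mem_singleton c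
        have hccut : CutVtx G c := hcBc.2
        have hcS : c ∈ S := hS.1 c hccut
        rcases bip_mem_or hbp hcBc.1 with hcW1 | hcW2
        · have hrule := ((hS.2 B W1 W2 hB hbp).2 hK).1 hk1
          have hW2cut : W2 ∩ cutSet G = ∅ := by
            ext x
            simp only [Set.mem_inter_iff, Set.mem_empty_iff_false, iff_false, not_and]
            intro hx1 hx2
            have hxB : x ∈ B ∩ cutSet G := ⟨bip_mem_B_right hbp hx1, hx2⟩
            rw [hc0] at hxB
            exact Set.disjoint_left.mp hbp.2.2.1 hcW1 (hxB ▸ hx1)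
          obtain ⟨a, haeq⟩ := Set.ncard_eq_one.mp hrule.2
          have haP : a ∈ S ∩ (W2 \ cutSet G) := haeq ▸ Set.mem_singleton a
          obtain ⟨haS, haW2, hanc'⟩ := haP
          have hanc : ¬ CutVtx G a := hanc'
          have hSW2 : ∀ y, y ∈ S → y ∈ W2 → y = a := by
            intro y hy1 hy2
            by_cases hyc : CutVtx G y
            · exact absurd (show y ∈ (∅ : Set V) by rw [← hW2cut]; exact ⟨hy2, hyc⟩) (Set.notMem_empty y)
            · have hy3 : y ∈ S ∩ (W2 \ cutSet G) := ⟨hy1, hy2, hyc⟩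
              rw [haeq] at hy3
              exact hy3
          have hznbr : ∀ y : ↥S, (G.induce S).Adj z y → y = ⟨a, haS⟩ := by
            intro y hy
            have hyB : y.1 ∈ B := nbrs_in_block hG hS hB hzB hznc hy
            exact Subtype.ext (hSW2 y.1 y.2 (bip_adj_mem_right hbp hzW1 hyB hy))
          have haz : a ≠ z.1 := fun h =>
            Set.disjoint_left.mp hbp.2.2.1 hzW1 (h ▸ haW2)
          have hcl : ∀ x ∈ ({z} : Set ↥S), ∀ y, (G.induce S).Adj x y →
              y ≠ ⟨a, haS⟩ → y ∈ ({z} : Set ↥S) := by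
            intro x hx y hxy hyc
            rw [Set.eq_of_mem_singleton hx] at hxy
            exact absurd (hznbr y hxy) hyc
          have hanK : (⟨a, haS⟩ : ↥S) ∉ ({z} : Set ↥S) := fun h =>
            haz (congrArg Subtype.val (Set.eq_of_mem_singleton h))
          have hadjza : (G.induce S).Adj z ⟨a, haS⟩ := bip_adj hbp hzW1 haW2
          have hecca : ecc (G.induce S) ⟨a, haS⟩ ≤ gradius (G.induce S) := by
            refine ecc_le fun u => ?_
            by_cases hu : u = z
            · subst hu
              have h2 : (G.induce S).dist ⟨a, haS⟩ u ≤ 1 := by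
                have := dist_le hadjza.symm.toWalk
                simpa using this
              omega
            · have hth := dist_through hTconn (Set.mem_singleton z) hanK hcl
                (by simpa using hu)
              have h5 := dist_le_ecc (H := G.induce S) z u
              rw [hzecc] at h5
              omega
          have haecc : ecc (G.induce S) ⟨a, haS⟩ = gradius (G.induce S) :=
            ecc_eq_of_center (center_of_le hecca)
          exact leafpair hG hS hne hc hz1 hz2 hB (compBipOn_symm hbp)
            (fun h => hK ⟨h.2, h.1⟩) hc0 hcW1 haS haW2 hanc haecc
        · exact leafpair hG hS hne hc hz1 hz2 hB hbp hK hc0 hcW2 z.2 hzW1 hznc hzecc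
      · have hsplit := bip_cut_ncard_split hG hS hbp
        rw [hk2] at hsplit
        have hcases : (W1 ∩ cutSet G).ncard = 0 ∨ (W1 ∩ cutSet G).ncard = 1 ∨
            (W1 ∩ cutSet G).ncard = 2 := by omega
        rcases hcases with h0 | h1 | h2'
        · have hV2c : (W2 ∩ cutSet G).ncard = 2 := by omega
          exact deepcase hG hS hne hc hz1 hz2 hB hbp hK hk2 hV2c z hzW1 hznc hzecc
        · have hV2c : (W2 ∩ cutSet G).ncard = 1 := by omega
          have hrule := (((hS.2 B W1 W2 hB hbp).2 hK).2 hk2).2.2 ⟨h1, hV2c⟩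
          have hmem : z.1 ∈ S ∩ (B \ cutSet G) := ⟨z.2, hzB, hznc⟩
          rw [hrule] at hmem
          exact Set.notMem_empty _ hmem
        · have hrule := (((hS.2 B W1 W2 hB hbp).2 hK).2 hk2).1 h2'
          have hmem : z.1 ∈ S ∩ (W1 \ cutSet G) := ⟨z.2, hzW1, hznc⟩
          rw [hrule.2] at hmem
          exact Set.notMem_empty _ hmem
  rcases bip_mem_or hbp0 hzB with h | h
  · exact inner V1 V2 hbp0 h
  · exact inner V2 V1 (compBipOn_symm hbp0) h

end Main


end Aux

theorem stmt_11 {V : Type*} [Fintype V] (G : SimpleGraph V) (hG : ClassB G)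
    (h4 : 4 ≤ gdiam G) (S : Set V) (hS : AssocSet G S)
    (z1 z2 : S) (hne : z1 ≠ z2) (hc : gcenter (G.induce S) = {z1, z2}) :
    CutVtx G z1.1 ∨ CutVtx G z2.1 := by
  classical
  by_cases h1 : CutVtx G z1.1
  · exact Or.inl h1
  by_cases h2 : CutVtx G z2.1
  · exact Or.inr h2
  exfalso
  have hz1cen : ecc (G.induce S) z1 = gradius (G.induce S) :=
    ecc_eq_of_center (by rw [hc]; exact Set.mem_insert _ _)
  exact center_noncut_false hG hS hne hc h1 h2 z1 hz1cen h1
end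

section
/- Every diametrical path in a graph G belonging to class B contains a central vertex of G. -/
open SimpleGraph

variable {V : Type*}

namespace BB

/-- Reachability avoiding a set of vertices. -/
def RA (G : SimpleGraph V) (S : Set V) (u v : V) : Prop :=
  ∃ W : G.Walk u v, ∀ x ∈ W.support, x ∉ S

/-- A vertex set is connected via walks staying inside it. -/
def Conn (G : SimpleGraph V) (S : Set V) : Prop :=
  ∀ u ∈ S, ∀ v ∈ S, ∃ W : G.Walk u v, ∀ x ∈ W.support, x ∈ S

def GoodSet (G : SimpleGraph V) (S : Set V) : Prop :=
  (S.Nonempty ∧ Conn G S) ∧ ∀ x ∈ S, ((S \ {x}).Nonempty ∧ Conn G (S \ {x}))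

variable {G : SimpleGraph V} {S T B B1 B2 V1 V2 : Set V}
variable {a b u v w c z o o' g g' q s x y t : V}

lemma RA.refl (hu : u ∉ S) : RA G S u u := ⟨Walk.nil, by simp [hu]⟩

lemma RA.symm (h : RA G S u v) : RA G S v u := by
  obtain ⟨W, hW⟩ := h
  exact ⟨W.reverse, by intro x hx; exact hW x (by simpa [Walk.support_reverse] using hx)⟩

lemma RA.trans (h : RA G S u v) (h' : RA G S v w) : RA G S u w := by
  obtain ⟨W, hW⟩ := h; obtain ⟨W', hW'⟩ := h'
  refine ⟨W.append W', fun x hx => ?_⟩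
  rcases (Walk.mem_support_append_iff _ _).1 hx with hx | hx
  · exact hW x hx
  · exact hW' x hx

lemma RA.not_mem_left (h : RA G S u v) : u ∉ S := by
  obtain ⟨W, hW⟩ := h; exact hW u W.start_mem_support

lemma RA.not_mem_right (h : RA G S u v) : v ∉ S := by
  obtain ⟨W, hW⟩ := h; exact hW v W.end_mem_support


lemma reachable_induce_of_walk (W : G.Walk u v) (h : ∀ x ∈ W.support, x ∈ S)
    (hu : u ∈ S) (hv : v ∈ S) : (G.induce S).Reachable ⟨u, hu⟩ ⟨v, hv⟩ := by
  induction W with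
  | nil => exact Reachable.refl _
  | @cons a b c hadj W ih =>
      have hb : b ∈ S := h b (by simp)
      have h1 : (G.induce S).Adj ⟨a, hu⟩ ⟨b, hb⟩ := by
        simp only [comap_adj, Function.Embedding.coe_subtype]
        exact hadj
      exact (h1.reachable).trans (ih (fun x hx => h x (by simp [hx])) hb hv)

lemma walk_of_induce_walk {a b : ↥S} (W : (G.induce S).Walk a b) :
    ∃ W' : G.Walk a.1 b.1, ∀ x ∈ W'.support, x ∈ S := by
  induction W with
  | nil => exact ⟨Walk.nil, by simp⟩
  | @cons a b c hadj W ih =>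
      obtain ⟨W', hW'⟩ := ih
      have hadj' : G.Adj a.1 b.1 := by
        simpa only [comap_adj, Function.Embedding.coe_subtype] using hadj
      refine ⟨Walk.cons hadj' W', fun x hx => ?_⟩
      rw [Walk.support_cons, List.mem_cons] at hx
      rcases hx with h | h
      · exact h ▸ a.2
      · exact hW' x h

lemma bbConnectedInduceIff : (G.induce S).Connected ↔ S.Nonempty ∧ Conn G S := by
  constructor
  · intro h
    obtain ⟨⟨u, hu⟩⟩ := h.nonempty
    refine ⟨⟨u, hu⟩, fun a ha b hb => ?_⟩
    obtain ⟨W⟩ := h.preconnected ⟨a, ha⟩ ⟨b, hb⟩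
    exact walk_of_induce_walk W
  · rintro ⟨⟨s, hs⟩, hconn⟩
    rw [connected_iff]
    refine ⟨fun a b => ?_, ⟨⟨s, hs⟩⟩⟩
    obtain ⟨W, hW⟩ := hconn a.1 a.2 b.1 b.2
    exact reachable_induce_of_walk W hW a.2 b.2


lemma induce_walk_of_walk (W : G.Walk u v) (h : ∀ x ∈ W.support, x ∈ S)
    (hu : u ∈ S) (hv : v ∈ S) :
    ∃ W' : (G.induce S).Walk ⟨u, hu⟩ ⟨v, hv⟩, ∀ x ∈ W'.support, x.1 ∈ W.support := by
  induction W with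
  | nil => exact ⟨Walk.nil, by simp⟩
  | @cons a b c hadj W ih =>
      have hb : b ∈ S := h b (by simp)
      obtain ⟨W', hW'⟩ := ih (fun x hx => h x (by simp [hx])) hb hv
      have hadj' : (G.induce S).Adj ⟨a, hu⟩ ⟨b, hb⟩ := by
        simp only [comap_adj, Function.Embedding.coe_subtype]; exact hadj
      refine ⟨Walk.cons hadj' W', fun x hx => ?_⟩
      rw [Walk.support_cons, List.mem_cons] at hx
      rcases hx with h' | h'
      · simp [h']
      · simp [hW' x h']

lemma walk_of_induce_walk' {a b : ↥S} (W : (G.induce S).Walk a b) :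
    ∃ W' : G.Walk a.1 b.1, ∀ x ∈ W'.support, ∃ y ∈ W.support, y.1 = x := by
  induction W with
  | nil => exact ⟨Walk.nil, by simp⟩
  | @cons a b c hadj W ih =>
      obtain ⟨W', hW'⟩ := ih
      have hadj' : G.Adj a.1 b.1 := by
        simpa only [comap_adj, Function.Embedding.coe_subtype] using hadj
      refine ⟨Walk.cons hadj' W', fun x hx => ?_⟩
      rw [Walk.support_cons, List.mem_cons] at hx
      rcases hx with h' | h'
      · exact ⟨a, by simp [h']⟩
      · obtain ⟨y, hy, hyx⟩ := hW' x h'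
        exact ⟨y, by simp [hy], hyx⟩

lemma conn_induce_iff {T : Set ↥S} :
    Conn (G.induce S) T ↔ Conn G (Subtype.val '' T) := by
  constructor
  · rintro hc x ⟨a, ha, rfl⟩ y ⟨b, hb, rfl⟩
    obtain ⟨W, hW⟩ := hc a ha b hb
    obtain ⟨W', hW'⟩ := walk_of_induce_walk' W
    refine ⟨W', fun x hx => ?_⟩
    obtain ⟨y, hy, rfl⟩ := hW' x hx
    exact ⟨y, hW y hy, rfl⟩
  · rintro hc a ha b hb
    obtain ⟨W, hW⟩ := hc a.1 ⟨a, ha, rfl⟩ b.1 ⟨b, hb, rfl⟩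
    obtain ⟨W', hW'⟩ := induce_walk_of_walk W (fun x hx => by
        obtain ⟨y, _, rfl⟩ := hW x hx; exact y.2) a.2 b.2
    refine ⟨W', fun x hx => ?_⟩
    obtain ⟨y, hy, hyx⟩ := hW x.1 (hW' x hx)
    rwa [show y = x from Subtype.ext hyx] at hy

lemma connected_induce₂_iff {T : Set ↥S} :
    ((G.induce S).induce T).Connected ↔
      (Subtype.val '' T).Nonempty ∧ Conn G (Subtype.val '' T) := by
  rw [bbConnectedInduceIff, conn_induce_iff, Set.image_nonempty]

lemma noCutVtx_iff :
    NoCutVtx (G.induce S) ↔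
      (S.Nonempty ∧ Conn G S) ∧
        ∀ x ∈ S, ((S \ {x}).Nonempty ∧ Conn G (S \ {x})) := by
  rw [NoCutVtx, bbConnectedInduceIff]
  refine and_congr Iff.rfl ?_
  have himg : ∀ w : ↥S, (Subtype.val '' ({w}ᶜ : Set ↥S)) = S \ {w.1} := by
    intro w
    ext x
    constructor
    · rintro ⟨y, hy, rfl⟩
      exact ⟨y.2, fun h => hy (Subtype.ext h)⟩
    · rintro ⟨hxS, hxw⟩
      exact ⟨⟨x, hxS⟩, fun h => hxw (congrArg Subtype.val h), rfl⟩
  constructor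
  · intro h x hx
    have := h ⟨x, hx⟩
    rw [connected_induce₂_iff, himg] at this
    exact this
  · intro h w
    rw [connected_induce₂_iff, himg]
    exact h w.1 w.2


lemma conn_of_pivot {p0 : V} (hp : p0 ∈ S)
    (h : ∀ u ∈ S, ∃ W : G.Walk u p0, ∀ z ∈ W.support, z ∈ S) : Conn G S := by
  intro u hu v hv
  obtain ⟨W1, h1⟩ := h u hu
  obtain ⟨W2, h2⟩ := h v hv
  refine ⟨W1.append W2.reverse, fun x hx => ?_⟩
  rcases (Walk.mem_support_append_iff _ _).1 hx with hx | hx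
  · exact h1 x hx
  · exact h2 x (by simpa [Walk.support_reverse] using hx)

lemma conn_union (h1 : Conn G S) (h2 : Conn G T) {s : V} (hs : s ∈ S ∩ T) :
    Conn G (S ∪ T) := by
  refine conn_of_pivot (Or.inl hs.1) ?_
  rintro u (hu | hu)
  · obtain ⟨W, hW⟩ := h1 u hu s hs.1
    exact ⟨W, fun z hz => Or.inl (hW z hz)⟩
  · obtain ⟨W, hW⟩ := h2 u hu s hs.2
    exact ⟨W, fun z hz => Or.inr (hW z hz)⟩

lemma goodSet_diff_conn (hB : GoodSet G S) (x : V) :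
    Conn G (S \ {x}) := by
  by_cases hx : x ∈ S
  · exact (hB.2 x hx).2
  · rw [Set.diff_singleton_eq_self hx]
    exact hB.1.2

lemma path_minus {q1 q2 : V} {P : G.Walk q1 q2} (hP : P.IsPath) (x : V) :
    ∀ y ∈ P.support, y ≠ x → ∃ e, (e = q1 ∨ e = q2) ∧ e ≠ x ∧
      ∃ W : G.Walk y e, (∀ z ∈ W.support, z ∈ P.support) ∧ x ∉ W.support := by
  classical
  induction P with
  | nil =>
      intro y hy hyx
      rw [Walk.support_nil, List.mem_singleton] at hy
      subst hy
      refine ⟨y, Or.inl rfl, hyx, Walk.nil, ?_, ?_⟩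
      · intro z hz; simpa using hz
      · simp [Ne.symm hyx]
  | @cons q1 h q2 hadj Q ih =>
      intro y hy hyx
      have hq1Q : q1 ∉ Q.support := ((Walk.cons_isPath_iff _ _).1 hP).2
      have hQpath : Q.IsPath := ((Walk.cons_isPath_iff _ _).1 hP).1
      rw [Walk.support_cons, List.mem_cons] at hy
      by_cases hxq1 : x = q1
      · subst hxq1
        have hyQ : y ∈ Q.support := by
          rcases hy with rfl | hy
          · exact absurd rfl hyx
          · exact hy
        refine ⟨q2, Or.inr rfl, fun h' => ?_, Q.dropUntil y hyQ, ?_, ?_⟩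
        · exact hq1Q (h' ▸ Q.end_mem_support)
        · intro z hz
          rw [Walk.support_cons, List.mem_cons]
          exact Or.inr (Q.support_dropUntil_subset hyQ hz)
        · intro hc
          exact hq1Q (Q.support_dropUntil_subset hyQ hc)
      · rcases hy with rfl | hyQ
        · refine ⟨y, Or.inl rfl, hyx, Walk.nil, ?_, ?_⟩
          · intro z hz
            rw [Walk.support_cons, List.mem_cons]
            exact Or.inl (by simpa using hz)
          · simp [Ne.symm hyx]
        · obtain ⟨e, he, hex, W, hWsup, hWx⟩ := ih hQpath y hyQ hyx
          rcases he with rfl | rfl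
          · -- e = h : extend with the edge h -> q1
            refine ⟨q1, Or.inl rfl, fun h' => hxq1 h'.symm, W.concat hadj.symm, ?_, ?_⟩
            · intro z hz
              rw [Walk.support_concat, List.mem_append,
                List.mem_singleton] at hz
              rw [Walk.support_cons, List.mem_cons]
              rcases hz with hz | rfl
              · exact Or.inr (hWsup z hz)
              · exact Or.inl rfl
            · rw [Walk.support_concat, List.mem_append,
                List.mem_singleton]
              rintro (hc | rfl)
              · exact hWx hc
              · exact hxq1 rfl
          · refine ⟨e, Or.inr rfl, hex, W, fun z hz => ?_, hWx⟩
            rw [Walk.support_cons, List.mem_cons]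
            exact Or.inr (hWsup z hz)

lemma ear {B : Set V} (hB : GoodSet G B) {q1 q2 : V} {P : G.Walk q1 q2} (hP : P.IsPath)
    (hne : q1 ≠ q2) (h1 : q1 ∈ B) (h2 : q2 ∈ B)
    (hint : ∀ z ∈ P.support, z ∈ B → z = q1 ∨ z = q2) :
    GoodSet G (B ∪ {z | z ∈ P.support}) := by
  classical
  set S := B ∪ {z | z ∈ P.support} with hSdef
  have hBS : B ⊆ S := Set.subset_union_left
  have hPS : ∀ z ∈ P.support, z ∈ S := fun z hz => Or.inr hz
  constructor
  · constructor
    · exact ⟨q1, hBS h1⟩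
    · refine conn_of_pivot (hBS h1) ?_
      rintro u (hu | hu)
      · obtain ⟨W, hW⟩ := hB.1.2 u hu q1 h1
        exact ⟨W, fun z hz => hBS (hW z hz)⟩
      · refine ⟨(P.takeUntil u hu).reverse, fun z hz => ?_⟩
        rw [Walk.support_reverse, List.mem_reverse] at hz
        exact hPS z (P.support_takeUntil_subset hu hz)
  · intro x hx
    -- pivot : q1 or q2, distinct from x
    obtain ⟨e0, he0B, he0or, he0x⟩ : ∃ e0, e0 ∈ B ∧ (e0 = q1 ∨ e0 = q2) ∧ e0 ≠ x := by
      by_cases h : q1 = x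
      · exact ⟨q2, h2, Or.inr rfl, fun hc => hne (h ▸ hc ▸ rfl)⟩
      · exact ⟨q1, h1, Or.inl rfl, h⟩
    have hBx : Conn G (B \ {x}) := goodSet_diff_conn hB x
    have hreachB : ∀ u ∈ B, u ≠ x → ∃ W : G.Walk u e0,
        (∀ z ∈ W.support, z ∈ B) ∧ x ∉ W.support := by
      intro u hu hux
      obtain ⟨W, hW⟩ := hBx u ⟨hu, hux⟩ e0 ⟨he0B, he0x⟩
      exact ⟨W, fun z hz => (hW z hz).1, fun hc => (hW x hc).2 rfl⟩
    constructor
    · exact ⟨e0, hBS he0B, he0x⟩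
    · refine conn_of_pivot ⟨hBS he0B, he0x⟩ ?_
      rintro u ⟨hu | hu, hux⟩
      · obtain ⟨W, h1', h2'⟩ := hreachB u hu hux
        exact ⟨W, fun z hz => ⟨hBS (h1' z hz), fun hc => h2' (hc ▸ hz)⟩⟩
      · obtain ⟨e, heor, hex, W1, hW1sup, hW1x⟩ := path_minus hP x u hu hux
        have heB : e ∈ B := by rcases heor with rfl | rfl; exacts [h1, h2]
        obtain ⟨W2, h1', h2'⟩ := hreachB e heB hex
        refine ⟨W1.append W2, fun z hz => ?_⟩
        rcases (Walk.mem_support_append_iff _ _).1 hz with hz | hz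
        · exact ⟨hPS z (hW1sup z hz), fun hc => hW1x (hc ▸ hz)⟩
        · exact ⟨hBS (h1' z hz), fun hc => h2' (hc ▸ hz)⟩


lemma noCutVtx_iff_goodSet : NoCutVtx (G.induce S) ↔ GoodSet G S := noCutVtx_iff

lemma exists_block_superset [Fintype V] (hS : GoodSet G S) :
    ∃ B : Set V, S ⊆ B ∧ IsBlockSet G B := by
  classical
  let F : Finset (Finset V) :=
    Finset.univ.filter (fun T : Finset V => S ⊆ ↑T ∧ GoodSet G (↑T : Set V))
  have hmemF : ∀ T : Finset V, T ∈ F ↔ S ⊆ ↑T ∧ GoodSet G (↑T : Set V) := by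
    intro T; simp [F]
  have hne : F.Nonempty := by
    refine ⟨(Set.toFinite S).toFinset, (hmemF _).2 ?_⟩
    rw [Set.Finite.coe_toFinset]
    exact ⟨Set.Subset.rfl, hS⟩
  obtain ⟨T, hTF, hTmax⟩ := F.exists_max_image Finset.card hne
  obtain ⟨hST, hTgood⟩ := (hmemF T).1 hTF
  refine ⟨↑T, hST, noCutVtx_iff_goodSet.2 hTgood, ?_⟩
  intro C hTC hC
  have hCgood : GoodSet G C := noCutVtx_iff_goodSet.1 hC
  have hCF : (Set.toFinite C).toFinset ∈ F := by
    rw [hmemF, Set.Finite.coe_toFinset]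
    exact ⟨hST.trans hTC, hCgood⟩
  have hsub : T ⊆ (Set.toFinite C).toFinset := by
    intro x hx
    rw [Set.Finite.mem_toFinset]
    exact hTC hx
  have := Finset.eq_of_subset_of_card_le hsub (hTmax _ hCF)
  rw [← Set.Finite.coe_toFinset (Set.toFinite C), ← this]

lemma isBlockSet_goodSet (hB : IsBlockSet G B) : GoodSet G B :=
  noCutVtx_iff_goodSet.1 hB.1

lemma block_eq_of_two_mem (hB1 : IsBlockSet G B1) (hB2 : IsBlockSet G B2)
    (huv : u ≠ v) (hu1 : u ∈ B1) (hu2 : u ∈ B2) (hv1 : v ∈ B1) (hv2 : v ∈ B2) :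
    B1 = B2 := by
  have g1 := isBlockSet_goodSet hB1
  have g2 := isBlockSet_goodSet hB2
  have hgood : GoodSet G (B1 ∪ B2) := by
    constructor
    · exact ⟨⟨u, Or.inl hu1⟩, conn_union g1.1.2 g2.1.2 ⟨hu1, hu2⟩⟩
    · intro x hx
      have hpt : ∃ p, p ≠ x ∧ p ∈ B1 ∧ p ∈ B2 := by
        by_cases h : u = x
        · exact ⟨v, fun hc => huv (h ▸ hc ▸ rfl), hv1, hv2⟩
        · exact ⟨u, h, hu1, hu2⟩
      obtain ⟨p, hpx, hp1, hp2⟩ := hpt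
      have : (B1 ∪ B2) \ {x} = (B1 \ {x}) ∪ (B2 \ {x}) := by
        ext z; simp [Set.mem_diff, Set.mem_union]; tauto
      rw [this]
      exact ⟨⟨p, Or.inl ⟨hp1, hpx⟩⟩,
        conn_union (goodSet_diff_conn g1 x) (goodSet_diff_conn g2 x)
          ⟨⟨hp1, hpx⟩, ⟨hp2, hpx⟩⟩⟩
  have e1 : B1 = B1 ∪ B2 := hB1.2 _ Set.subset_union_left (noCutVtx_iff_goodSet.2 hgood)
  have e2 : B2 = B1 ∪ B2 := hB2.2 _ Set.subset_union_right (noCutVtx_iff_goodSet.2 hgood)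
  exact e1.trans e2.symm


/-! ### distance utilities -/

lemma dist_split (hconn : G.Connected) {W : G.Walk u v} (hW : W.length = G.dist u v)
    (hc : c ∈ W.support) : G.dist u c + G.dist c v = G.dist u v := by
  classical
  have hsplit := W.take_spec hc
  have hlen : (W.takeUntil c hc).length + (W.dropUntil c hc).length = W.length := by
    rw [← Walk.length_append, hsplit]
  have h1 : G.dist u c ≤ (W.takeUntil c hc).length := dist_le _
  have h2 : G.dist c v ≤ (W.dropUntil c hc).length := dist_le _
  have hle : G.dist u c + G.dist c v ≤ G.dist u v := by omega
  exact le_antisymm hle (hconn.dist_triangle)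

lemma sep_dist (hconn : G.Connected) (h : ∀ W : G.Walk u v, c ∈ W.support) :
    G.dist u v = G.dist u c + G.dist c v := by
  obtain ⟨W, hW⟩ := (hconn u v).exists_walk_length_eq_dist
  exact (dist_split hconn hW (h W)).symm

lemma notRA_singleton (h : ¬ RA G {c} u v) (W : G.Walk u v) : c ∈ W.support := by
  by_contra hc
  exact h ⟨W, fun x hx hxc => hc ((Set.mem_singleton_iff.1 hxc) ▸ hx)⟩

/-! ### gates -/

def IsGate (G : SimpleGraph V) (B : Set V) (o g : V) : Prop :=
  g ∈ B ∧ ∃ q, RA G B o q ∧ G.Adj q g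

lemma exists_gate_mem_support :
    ∀ {o t : V} (W : G.Walk o t), o ∉ B → t ∈ B →
      ∃ g, IsGate G B o g ∧ g ∈ W.support := by
  intro o t W
  induction W with
  | nil => intro ho ht; exact absurd ht ho
  | @cons a b c hadj W ih =>
      intro ho ht
      by_cases hb : b ∈ B
      · exact ⟨b, ⟨hb, a, RA.refl ho, hadj⟩, by simp⟩
      · obtain ⟨g, ⟨hgB, q, hq, hqg⟩, hgsup⟩ := ih hb ht
        have hab : RA G B a b := ⟨Walk.cons hadj Walk.nil, by
          intro x hx
          simp only [Walk.support_cons, Walk.support_nil, List.mem_cons,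
            List.mem_singleton] at hx
          rcases hx with rfl | rfl | h
          · exact ho
          · exact hb
          · exact absurd h (by simp)⟩
        exact ⟨g, ⟨hgB, q, hab.trans hq, hqg⟩, by simp [hgsup]⟩

lemma isPath_concat {p : G.Walk u v} (hp : p.IsPath) (h : G.Adj v w)
    (hw : w ∉ p.support) : (p.concat h).IsPath := by
  rw [← Walk.isPath_reverse_iff, Walk.reverse_concat]
  refine hp.reverse.cons ?_
  rwa [Walk.support_reverse, List.mem_reverse]

lemma gate_unique (hB : IsBlockSet G B) {g g' : V}
    (h : IsGate G B o g) (h' : IsGate G B o g') : g = g' := by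
  classical
  by_contra hgg
  obtain ⟨hgB, q, hq, hqg⟩ := h
  obtain ⟨hg'B, q', hq', hqg'⟩ := h'
  obtain ⟨W, hWav⟩ := hq.symm.trans hq'
  have hbyav : ∀ x ∈ W.bypass.support, x ∉ B := fun x hx =>
    hWav x (W.support_bypass_subset hx)
  have hg_not : g ∉ W.bypass.support := fun hc => hbyav g hc hgB
  have hg'_not : g' ∉ W.bypass.support := fun hc => hbyav g' hc hg'B
  have hinner : (W.bypass.concat hqg').IsPath := isPath_concat W.bypass_isPath hqg' hg'_not
  have hP : (Walk.cons hqg.symm (W.bypass.concat hqg')).IsPath := by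
    refine hinner.cons ?_
    rw [Walk.support_concat, List.mem_append, List.mem_singleton]
    rintro (hc | rfl)
    · exact hg_not hc
    · exact hgg rfl
  have hear := ear (isBlockSet_goodSet hB) hP hgg hgB hg'B ?_
  · have heq := hB.2 _ (Set.subset_union_left) (noCutVtx_iff_goodSet.2 hear)
    have hqmem : q ∈ B ∪ {z | z ∈ (Walk.cons hqg.symm (W.bypass.concat hqg')).support} := by
      right
      simp only [Set.mem_setOf_eq, Walk.support_cons, List.mem_cons, Walk.support_concat,
        List.concat_eq_append, List.mem_append, List.mem_singleton]
      exact Or.inr (Or.inl W.bypass.start_mem_support)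
    rw [← heq] at hqmem
    exact hq.not_mem_right hqmem
  · intro z hz hzB
    simp only [Walk.support_cons, List.mem_cons, Walk.support_concat,
      List.concat_eq_append, List.mem_append, List.mem_singleton] at hz
    rcases hz with rfl | hz | rfl | h
    · exact Or.inl rfl
    · exact absurd hzB (hbyav z hz)
    · exact Or.inr rfl
    · exact absurd h List.not_mem_nil


lemma IsGate.not_mem (h : IsGate G B o g) : o ∉ B := by
  obtain ⟨_, q, hq, _⟩ := h
  exact hq.not_mem_left

lemma gate_exists (hconn : G.Connected) (hBne : B.Nonempty) (ho : o ∉ B) :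
    ∃ g, IsGate G B o g := by
  obtain ⟨b0, hb0⟩ := hBne
  obtain ⟨W⟩ := hconn o b0
  obtain ⟨g, hg, _⟩ := exists_gate_mem_support W ho hb0
  exact ⟨g, hg⟩

lemma gate_hit (hB : IsBlockSet G B) (h : IsGate G B o g) (W : G.Walk o t)
    (ht : t ∈ B) : g ∈ W.support := by
  obtain ⟨g', hg', hsup⟩ := exists_gate_mem_support W h.not_mem ht
  rwa [gate_unique hB h hg']

lemma gate_dist (hconn : G.Connected) (hB : IsBlockSet G B) (h : IsGate G B o g)
    (hq : q ∈ B) : G.dist o q = G.dist o g + G.dist g q := by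
  obtain ⟨W, hW⟩ := (hconn o q).exists_walk_length_eq_dist
  exact (dist_split hconn hW (gate_hit hB h W hq)).symm

lemma gate_branch_dist (hconn : G.Connected) (hB : IsBlockSet G B)
    (h : IsGate G B o g) (h' : IsGate G B o' g') (hgg : g ≠ g') :
    G.dist o o' = G.dist o g + G.dist g g' + G.dist g' o' := by
  obtain ⟨W, hW⟩ := (hconn o o').exists_walk_length_eq_dist
  have hhit : ∃ x ∈ W.support, x ∈ B := by
    by_contra hc
    push_neg at hc
    have hra : RA G B o o' := ⟨W, hc⟩
    obtain ⟨hg'B, q', hq', hadj'⟩ := h'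
    exact hgg (gate_unique hB h ⟨hg'B, q', hra.trans hq', hadj'⟩)
  obtain ⟨x, hxsup, hxB⟩ := hhit
  classical
  have hgsup : g ∈ W.support := by
    have := gate_hit hB h (W.takeUntil x hxsup) hxB
    exact W.support_takeUntil_subset hxsup this
  have h1 : G.dist o g + G.dist g o' = G.dist o o' := dist_split hconn hW hgsup
  have h2 : G.dist o' g = G.dist o' g' + G.dist g' g := gate_dist hconn hB h' h.1
  have e1 : G.dist g o' = G.dist o' g := SimpleGraph.dist_comm ..
  have e2 : G.dist g' g = G.dist g g' := SimpleGraph.dist_comm ..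
  have e3 : G.dist g' o' = G.dist o' g' := SimpleGraph.dist_comm ..
  omega

lemma cutVtx_of_gate (h : IsGate G B o g) (hq : q ∈ B) (hqg : q ≠ g)
    (hhit : ∀ W : G.Walk o q, g ∈ W.support) : CutVtx G g := by
  intro hcon
  obtain ⟨-, hconn⟩ := bbConnectedInduceIff.1 hcon
  have ho : o ∈ ({g}ᶜ : Set V) := fun hc => h.not_mem ((Set.mem_singleton_iff.1 hc) ▸ h.1)
  obtain ⟨W, hWsup⟩ := hconn o ho q hqg
  exact (hWsup g (hhit W)) rfl

/-- separation bound: if `a` and `b` are separated by `c`,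
every vertex is close to `c`. -/
lemma sep_ecc_bound (hconn : G.Connected) {a b : V} (hab : ¬ RA G {c} a b)
    (ha : a ≠ c) (hb : b ≠ c) (w : V) (hw : w ≠ c) :
    G.dist c w = G.dist a w - G.dist a c ∨ G.dist c w = G.dist b w - G.dist b c := by
  have key : ¬ RA G {c} a w ∨ ¬ RA G {c} b w := by
    by_contra hc
    push_neg at hc
    exact hab (hc.1.trans hc.2.symm)
  rcases key with hkey | hkey
  · left
    have : G.dist a w = G.dist a c + G.dist c w := by
      obtain ⟨W, hW⟩ := (hconn a w).exists_walk_length_eq_dist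
      refine (dist_split hconn hW ?_).symm
      by_contra hcsup
      exact hkey ⟨W, fun x hx hxc => hcsup ((Set.mem_singleton_iff.1 hxc) ▸ hx)⟩
    omega
  · right
    have : G.dist b w = G.dist b c + G.dist c w := by
      obtain ⟨W, hW⟩ := (hconn b w).exists_walk_length_eq_dist
      refine (dist_split hconn hW ?_).symm
      by_contra hcsup
      exact hkey ⟨W, fun x hx hxc => hcsup ((Set.mem_singleton_iff.1 hxc) ▸ hx)⟩
    omega


lemma adj_dist_le (h : G.Adj u v) : G.dist u v ≤ 1 := by
  simpa using SimpleGraph.dist_le (Walk.cons h Walk.nil)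

lemma dist_getVert_le (hconn : G.Connected) (W : G.Walk a b) (i : ℕ) :
    G.dist a (W.getVert i) ≤ i := by
  induction W generalizing i with
  | nil => simp [Walk.getVert, SimpleGraph.dist_self]
  | @cons a c b hadj W ih =>
      cases i with
      | zero => simp [Walk.getVert_zero, SimpleGraph.dist_self]
      | succ i =>
          rw [Walk.getVert_cons_succ]
          calc G.dist a (W.getVert i) ≤ G.dist a c + G.dist c (W.getVert i) :=
                hconn.dist_triangle
            _ ≤ 1 + i := Nat.add_le_add (adj_dist_le hadj) (ih i)
            _ = i + 1 := by omega

lemma getVert_dist_le (W : G.Walk a b) (i : ℕ) :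
    G.dist (W.getVert i) b ≤ W.length - i := by
  induction W generalizing i with
  | nil => simp [Walk.getVert]
  | @cons a c b hadj W ih =>
      cases i with
      | zero =>
          rw [Walk.getVert_zero]
          simpa using SimpleGraph.dist_le (Walk.cons hadj W)
      | succ i =>
          rw [Walk.getVert_cons_succ]
          simpa [Walk.length_cons, Nat.succ_sub_succ] using ih i

section Geo
variable (hconn : G.Connected) {W : G.Walk a b} (hW : W.length = G.dist a b)

include hconn hW

lemma geo_dist_left {i : ℕ} (hi : i ≤ W.length) : G.dist a (W.getVert i) = i := by
  have h1 := dist_getVert_le hconn W i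
  have h2 := getVert_dist_le W i
  have h3 : G.dist a b ≤ G.dist a (W.getVert i) + G.dist (W.getVert i) b :=
    hconn.dist_triangle
  omega

lemma geo_dist_right {i : ℕ} (hi : i ≤ W.length) :
    G.dist (W.getVert i) b = W.length - i := by
  have h1 := dist_getVert_le hconn W i
  have h2 := getVert_dist_le W i
  have h3 : G.dist a b ≤ G.dist a (W.getVert i) + G.dist (W.getVert i) b :=
    hconn.dist_triangle
  omega

lemma geo_dist_between {i j : ℕ} (hij : i ≤ j) (hj : j ≤ W.length) :
    G.dist (W.getVert i) (W.getVert j) = j - i := by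
  have hle : ∀ k, i + k ≤ W.length → G.dist (W.getVert i) (W.getVert (i + k)) ≤ k := by
    intro k
    induction k with
    | zero => simp
    | succ k ih =>
        intro hk
        have hadj : G.Adj (W.getVert (i + k)) (W.getVert (i + k + 1)) :=
          W.adj_getVert_succ (by omega)
        calc G.dist (W.getVert i) (W.getVert (i + (k+1)))
            ≤ G.dist (W.getVert i) (W.getVert (i + k))
              + G.dist (W.getVert (i + k)) (W.getVert (i + k + 1)) := by
                have := hconn.dist_triangle (u := W.getVert i) (v := W.getVert (i+k))
                  (w := W.getVert (i + k + 1))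
                simpa [Nat.add_assoc] using this
          _ ≤ k + 1 := Nat.add_le_add (ih (by omega)) (adj_dist_le hadj)
  have h1 : G.dist (W.getVert i) (W.getVert j) ≤ j - i := by
    have := hle (j - i) (by omega)
    rwa [Nat.add_sub_cancel' hij] at this
  have h2 : G.dist a (W.getVert j) ≤ G.dist a (W.getVert i)
      + G.dist (W.getVert i) (W.getVert j) := hconn.dist_triangle
  rw [geo_dist_left hconn hW (by omega : i ≤ W.length),
    geo_dist_left hconn hW hj] at h2
  omega

lemma geo_ne {i j : ℕ} (hij : i ≠ j) (hi : i ≤ W.length) (hj : j ≤ W.length) :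
    W.getVert i ≠ W.getVert j := by
  intro hc
  rcases Nat.lt_or_ge i j with h | h
  · have := geo_dist_between hconn hW (Nat.le_of_lt h) hj
    rw [hc] at this
    simp [SimpleGraph.dist_self] at this
    omega
  · have hji : j ≤ i := h
    have := geo_dist_between hconn hW hji hi
    rw [hc] at this
    simp [SimpleGraph.dist_self] at this
    omega

end Geo

lemma exists_prefix_walk (W : G.Walk a b) {i : ℕ} (hi : i ≤ W.length) :
    ∃ P : G.Walk a (W.getVert i), ∀ x ∈ P.support, ∃ j, j ≤ i ∧ x = W.getVert j := by
  induction i with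
  | zero =>
      refine ⟨Walk.nil.copy rfl (W.getVert_zero).symm, ?_⟩
      intro x hx
      rw [Walk.support_copy, Walk.support_nil, List.mem_singleton] at hx
      exact ⟨0, le_refl _, by rw [hx, W.getVert_zero]⟩
  | succ i ih =>
      obtain ⟨P, hP⟩ := ih (by omega)
      refine ⟨P.concat (W.adj_getVert_succ (by omega)), ?_⟩
      intro x hx
      rw [Walk.support_concat, List.mem_append,
        List.mem_singleton] at hx
      rcases hx with hx | rfl
      · obtain ⟨j, hj, hxj⟩ := hP x hx
        exact ⟨j, by omega, hxj⟩
      · exact ⟨i + 1, le_refl _, rfl⟩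

lemma exists_suffix_walk (W : G.Walk a b) :
    ∀ (k i : ℕ), i + k = W.length →
      ∃ P : G.Walk (W.getVert i) b, ∀ x ∈ P.support, ∃ j, i ≤ j ∧ x = W.getVert j := by
  intro k
  induction k with
  | zero =>
      intro i hi
      have hib : i = W.length := by omega
      subst hib
      refine ⟨Walk.nil.copy W.getVert_length.symm rfl, ?_⟩
      intro x hx
      rw [Walk.support_copy, Walk.support_nil, List.mem_singleton] at hx
      exact ⟨W.length, le_refl _, hx.trans W.getVert_length.symm⟩
  | succ k ih =>
      intro i hi
      obtain ⟨P, hP⟩ := ih (i + 1) (by omega)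
      refine ⟨Walk.cons (W.adj_getVert_succ (by omega)) P, ?_⟩
      intro x hx
      rw [Walk.support_cons, List.mem_cons] at hx
      rcases hx with rfl | hx
      · exact ⟨i, le_refl _, rfl⟩
      · obtain ⟨j, hj, hxj⟩ := hP x hx
        exact ⟨j, by omega, hxj⟩

section Ecc
variable [Fintype V] [Nonempty V]

lemma dist_le_ecc (v w : V) : G.dist v w ≤ ecc G v :=
  le_csSup ((Set.finite_range _).bddAbove) ⟨w, rfl⟩

lemma ecc_le {v : V} {n : ℕ} (h : ∀ w, G.dist v w ≤ n) : ecc G v ≤ n :=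
  csSup_le (Set.range_nonempty _) (by rintro x ⟨w, rfl⟩; exact h w)

lemma ecc_le_gdiam (v : V) : ecc G v ≤ gdiam G :=
  le_csSup ((Set.finite_range _).bddAbove) ⟨v, rfl⟩

lemma dist_le_gdiam (v w : V) : G.dist v w ≤ gdiam G :=
  (dist_le_ecc v w).trans (ecc_le_gdiam v)

lemma central_of {z : V} {k : ℕ} (hup : ∀ w, G.dist z w ≤ k)
    (hlow : ∀ v, k ≤ ecc G v) : z ∈ gcenter G := by
  have hecc : ecc G z = k := le_antisymm (ecc_le hup) (hlow z)
  have hrad : gradius G = k := by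
    refine le_antisymm ?_ ?_
    · have hzmem : k ∈ Set.range (ecc G) := ⟨z, hecc⟩
      exact csInf_le (OrderBot.bddBelow _) hzmem
    · exact le_csInf (Set.range_nonempty _) (by rintro x ⟨v, rfl⟩; exact hlow v)
  simp only [gcenter, Set.mem_setOf_eq, hecc, hrad]

end Ecc


/-! ### complete bipartite blocks -/

lemma bip_symm (h : CompBipOn G B V1 V2) : CompBipOn G B V2 V1 := by
  obtain ⟨h1, h2, h3, h4, h5⟩ := h
  exact ⟨h2, h1, h3.symm, by rw [Set.union_comm]; exact h4, fun x hx y hy =>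
    (h5 x hx y hy).trans (by tauto)⟩

lemma bip_mem_cases (h : CompBipOn G B V1 V2) (hu : u ∈ B) : u ∈ V1 ∨ u ∈ V2 := by
  rw [← h.2.2.2.1] at hu; exact hu

lemma bip_sub1 (h : CompBipOn G B V1 V2) : V1 ⊆ B := by
  rw [← h.2.2.2.1]; exact Set.subset_union_left

lemma bip_sub2 (h : CompBipOn G B V1 V2) : V2 ⊆ B := bip_sub1 (bip_symm h)

lemma bip_adj_cross (h : CompBipOn G B V1 V2) (hu : u ∈ V1) (hv : v ∈ V2) :
    G.Adj u v :=
  (h.2.2.2.2 u (bip_sub1 h hu) v (bip_sub2 h hv)).2 (Or.inl ⟨hu, hv⟩)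

lemma bip_not_mem2 (h : CompBipOn G B V1 V2) (hu : u ∈ V1) : u ∉ V2 :=
  fun hc => (h.2.2.1.ne_of_mem hu hc) rfl

lemma bip_dist_cross (h : CompBipOn G B V1 V2) (hu : u ∈ V1) (hv : v ∈ V2) :
    G.dist u v = 1 :=
  SimpleGraph.dist_eq_one_iff_adj.2 (bip_adj_cross h hu hv)

lemma bip_dist_same1 (hconn : G.Connected) (h : CompBipOn G B V1 V2)
    (hu : u ∈ V1) (hv : v ∈ V1) (huv : u ≠ v) : G.dist u v = 2 := by
  obtain ⟨q, hq⟩ := h.2.1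
  have h1 : G.dist u q = 1 := bip_dist_cross h hu hq
  have h2 : G.dist q v = 1 := by
    rw [SimpleGraph.dist_comm]; exact bip_dist_cross h hv hq
  have hle : G.dist u v ≤ 2 := by
    calc G.dist u v ≤ G.dist u q + G.dist q v := hconn.dist_triangle
      _ = 2 := by rw [h1, h2]
  have hne : G.dist u v ≠ 0 := fun hc => huv (hconn.dist_eq_zero_iff.1 hc)
  have hnadj : ¬ G.Adj u v := by
    intro hc
    rcases (h.2.2.2.2 u (bip_sub1 h hu) v (bip_sub1 h hv)).1 hc with ⟨_, hv2⟩ | ⟨hu2, _⟩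
    · exact bip_not_mem2 h hv hv2
    · exact bip_not_mem2 h hu hu2
  have hne1 : G.dist u v ≠ 1 := fun hc => hnadj (SimpleGraph.dist_eq_one_iff_adj.1 hc)
  omega

lemma bip_dist_le_two (hconn : G.Connected) (h : CompBipOn G B V1 V2)
    (hu : u ∈ B) (hv : v ∈ B) : G.dist u v ≤ 2 := by
  by_cases huv : u = v
  · simp [huv, SimpleGraph.dist_self]
  rcases bip_mem_cases h hu with h1 | h1 <;> rcases bip_mem_cases h hv with h2 | h2
  · exact le_of_eq (bip_dist_same1 hconn h h1 h2 huv)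
  · exact (bip_dist_cross h h1 h2).le.trans (by omega)
  · have : G.dist u v = 1 := by rw [SimpleGraph.dist_comm]; exact bip_dist_cross h h2 h1
    omega
  · exact le_of_eq (bip_dist_same1 hconn (bip_symm h) h1 h2 huv)

lemma conn_singleton : Conn G ({x} : Set V) := by
  rintro p rfl q rfl
  exact ⟨Walk.nil, by simp⟩

lemma conn_pair (h : G.Adj u v) : Conn G ({u, v} : Set V) := by
  have hw : ∃ W : G.Walk u v, ∀ x ∈ W.support, x ∈ ({u, v} : Set V) := by
    refine ⟨Walk.cons h Walk.nil, ?_⟩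
    intro x hx
    simp only [Walk.support_cons, Walk.support_nil, List.mem_cons, List.mem_singleton] at hx
    rcases hx with rfl | rfl | hfalse
    · exact Or.inl rfl
    · exact Or.inr rfl
    · exact absurd hfalse (by simp)
  obtain ⟨W, hW⟩ := hw
  rintro p (rfl | rfl) q (rfl | rfl)
  · exact ⟨Walk.nil, by simp⟩
  · exact ⟨W, hW⟩
  · exact ⟨W.reverse, fun x hx => hW x (by simpa [Walk.support_reverse] using hx)⟩
  · exact ⟨Walk.nil, by simp⟩

lemma goodSet_pair (h : G.Adj u v) : GoodSet G ({u, v} : Set V) := by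
  have hne := h.ne
  refine ⟨⟨⟨u, Or.inl rfl⟩, conn_pair h⟩, ?_⟩
  intro t ht
  by_cases htu : t = u
  · have heq : ({u, v} : Set V) \ {t} = {v} := by
      ext z
      simp only [Set.mem_diff, Set.mem_insert_iff, Set.mem_singleton_iff, htu]
      constructor
      · rintro ⟨rfl | rfl, hz⟩
        · exact absurd rfl hz
        · rfl
      · rintro rfl; exact ⟨Or.inr rfl, fun hc => hne hc.symm⟩
    rw [heq]
    exact ⟨⟨v, rfl⟩, conn_singleton⟩
  · by_cases htv : t = v
    · have heq : ({u, v} : Set V) \ {t} = {u} := by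
        ext z
        simp only [Set.mem_diff, Set.mem_insert_iff, Set.mem_singleton_iff, htv]
        constructor
        · rintro ⟨rfl | rfl, hz⟩
          · rfl
          · exact absurd rfl hz
        · rintro rfl; exact ⟨Or.inl rfl, fun hc => hne hc⟩
      rw [heq]
      exact ⟨⟨u, rfl⟩, conn_singleton⟩
    · rw [Set.diff_singleton_eq_self (by simp [htu, htv])]
      exact ⟨⟨u, Or.inl rfl⟩, conn_pair h⟩

lemma triple_ncard_le {x y s : V} {C : Set V} (hsub : ({x, y, s} : Set V) ⊆ C)
    (hxy : x ≠ y) (hxs : x ≠ s) (hys : y ≠ s) (hC : C.Finite) : 3 ≤ C.ncard := by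
  have h2 : ({y, s} : Set V).ncard = 2 := Set.ncard_pair hys
  have h3 : ({x, y, s} : Set V).ncard = 3 := by
    rw [Set.ncard_insert_of_notMem (by simp [hxy, hxs]) (Set.toFinite _), h2]
  rw [← h3]
  exact Set.ncard_le_ncard hsub hC

lemma even_core [Fintype V] (hconn : G.Connected)
    (hcut2 : (B ∩ cutSet G).ncard ≤ 2)
    (hB : IsBlockSet G B) (hbip : CompBipOn G B V1 V2)
    {a b z x y w : V} {k : ℕ} (hk : 2 ≤ k)
    (hz1 : z ∈ V1) (hx2 : x ∈ V2) (hy2 : y ∈ V2) (hxy : x ≠ y)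
    (hax : G.dist a x = k - 1) (hby : G.dist b y = k - 1)
    (hgx : IsGate G B a x) (hgy : IsGate G B b y)
    (hdall : ∀ u v' : V, G.dist u v' ≤ 2*k)
    (htw : k + 1 ≤ G.dist z w) : False := by
  have hzB : z ∈ B := bip_sub1 hbip hz1
  have hxB : x ∈ B := bip_sub2 hbip hx2
  have hyB : y ∈ B := bip_sub2 hbip hy2
  set t := G.dist z w with hts
  have ht2k : t ≤ 2*k := hdall z w
  have hwB : w ∉ B := by
    intro hc
    have := bip_dist_le_two hconn hbip hzB hc
    omega
  obtain ⟨s, hs⟩ := gate_exists hconn ⟨z, hzB⟩ hwB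
  have hws : G.dist w z = G.dist w s + G.dist s z := gate_dist hconn hB hs hzB
  have hwz : G.dist w z = t := SimpleGraph.dist_comm ..
  have hdisj := hbip.2.2.1
  rcases bip_mem_cases hbip hs.1 with hs1 | hs2
  · by_cases hsz : s = z
    · -- gate of w is z itself
      have hxz : x ≠ z := fun hc => (hdisj.ne_of_mem hz1 hx2) hc.symm
      have hbr : G.dist a w = G.dist a x + G.dist x z + G.dist z w := by
        have := gate_branch_dist hconn hB hgx (hsz ▸ hs) hxz
        exact this
      have hxzd : G.dist x z = 1 := by
        rw [SimpleGraph.dist_comm]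
        exact bip_dist_cross hbip hz1 hx2
      have := hdall a w
      omega
    · -- s ∈ V1, s ≠ z : three cut vertices
      have hszd : G.dist s z = 2 := bip_dist_same1 hconn hbip hs1 hz1 hsz
      have hcx : CutVtx G x :=
        cutVtx_of_gate hgx hzB (hdisj.ne_of_mem hz1 hx2)
          (fun W => gate_hit hB hgx W hzB)
      have hcy : CutVtx G y :=
        cutVtx_of_gate hgy hzB (hdisj.ne_of_mem hz1 hy2)
          (fun W => gate_hit hB hgy W hzB)
      have hcs : CutVtx G s :=
        cutVtx_of_gate hs hzB (fun hc => hsz hc.symm)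
          (fun W => gate_hit hB hs W hzB)
      have hsub : ({x, y, s} : Set V) ⊆ B ∩ cutSet G := by
        rintro p (rfl | rfl | rfl)
        · exact ⟨hxB, hcx⟩
        · exact ⟨hyB, hcy⟩
        · exact ⟨hs.1, hcs⟩
      have hxs : x ≠ s := fun hc => (hdisj.ne_of_mem hs1 hx2) hc.symm
      have hys : y ≠ s := fun hc => (hdisj.ne_of_mem hs1 hy2) hc.symm
      have := triple_ncard_le hsub hxy hxs hys (Set.toFinite _)
      omega
  · have hszd : G.dist s z = 1 := by
      rw [SimpleGraph.dist_comm]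
      exact bip_dist_cross hbip hz1 hs2
    by_cases hsx : s = x
    · have hbr : G.dist w b = G.dist w x + G.dist x y + G.dist y b := by
        exact gate_branch_dist hconn hB (hsx ▸ hs) hgy hxy
      have hxy2 : G.dist x y = 2 := bip_dist_same1 hconn (bip_symm hbip) hx2 hy2 hxy
      have hyb : G.dist y b = k - 1 := by rw [SimpleGraph.dist_comm]; exact hby
      have hwx : G.dist w x + 1 = t := by rw [← hsx]; omega
      have := hdall w b
      omega
    · by_cases hsy : s = y
      · have hbr : G.dist w a = G.dist w y + G.dist y x + G.dist x a := by
          exact gate_branch_dist hconn hB (hsy ▸ hs) hgx (Ne.symm hxy)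
        have hxy2 : G.dist y x = 2 := bip_dist_same1 hconn (bip_symm hbip) hy2 hx2 (Ne.symm hxy)
        have hxa : G.dist x a = k - 1 := by rw [SimpleGraph.dist_comm]; exact hax
        have hwy : G.dist w y + 1 = t := by rw [← hsy]; omega
        have := hdall w a
        omega
      · -- s ∈ V2 \ {x,y}
        have hbr : G.dist a w = G.dist a x + G.dist x s + G.dist s w := by
          exact gate_branch_dist hconn hB hgx hs (fun hc => hsx hc.symm)
        have hxs2 : G.dist x s = 2 :=
          bip_dist_same1 hconn (bip_symm hbip) hx2 hs2 (fun hc => hsx hc.symm)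
        have hsw : G.dist s w + 1 = t := by
          have : G.dist w s = G.dist s w := SimpleGraph.dist_comm ..
          omega
        have := hdall a w
        omega

lemma even1_core [Fintype V] (hconn : G.Connected)
    (hblocks2 : ∃ B1 B2 : Set V, IsBlockSet G B1 ∧ IsBlockSet G B2 ∧ B1 ≠ B2)
    (hB : IsBlockSet G B) (hbip : CompBipOn G B V1 V2)
    {a b z w : V}
    (hz1 : z ∈ V1) (ha2 : a ∈ V2) (hb2 : b ∈ V2) (hab : a ≠ b)
    (hdall : ∀ u v' : V, G.dist u v' ≤ 2)
    (htw : 2 ≤ G.dist z w) : False := by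
  have hzB : z ∈ B := bip_sub1 hbip hz1
  have haB : a ∈ B := bip_sub2 hbip ha2
  have hbB : b ∈ B := bip_sub2 hbip hb2
  have hdisj := hbip.2.2.1
  have ht : G.dist z w = 2 := le_antisymm (hdall z w) htw
  by_cases hwB : w ∈ B
  · -- w is in the block, in the same part as z
    have hw1 : w ∈ V1 := by
      rcases bip_mem_cases hbip hwB with h1 | h2
      · exact h1
      · have := bip_dist_cross hbip hz1 h2
        omega
    have hwz : w ≠ z := by
      intro hc
      rw [hc, SimpleGraph.dist_self] at ht
      omega
    obtain ⟨B1', B2', hB1', hB2', hne'⟩ := hblocks2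
    obtain ⟨B', hB'blk, hB'ne⟩ : ∃ B', IsBlockSet G B' ∧ B' ≠ B := by
      by_cases h : B1' = B
      · exact ⟨B2', hB2', fun hc => hne' (h ▸ hc ▸ rfl)⟩
      · exact ⟨B1', hB1', h⟩
    obtain ⟨o, hoB', hoB⟩ : ∃ o, o ∈ B' ∧ o ∉ B := by
      by_contra hc
      push_neg at hc
      exact hB'ne (hB'blk.2 B (fun p hp => hc p hp) hB.1)
    obtain ⟨g, hg⟩ := gate_exists hconn ⟨z, hzB⟩ hoB
    have hog : 1 ≤ G.dist o g := by
      have hne : o ≠ g := fun hc => hoB (hc ▸ hg.1)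
      exact hconn.pos_dist_of_ne hne
    rcases bip_mem_cases hbip hg.1 with hg1 | hg2
    · by_cases hgz : g = z
      · have hd := gate_dist hconn hB hg hwB
        have : G.dist g w = 2 := by rw [hgz]; exact ht
        have := hdall o w
        omega
      · have hd := gate_dist hconn hB hg hzB
        have : G.dist g z = 2 := bip_dist_same1 hconn hbip hg1 hz1 hgz
        have := hdall o z
        omega
    · by_cases hga : g = a
      · have hd := gate_dist hconn hB hg hbB
        have : G.dist g b = 2 :=
          bip_dist_same1 hconn (bip_symm hbip) hg2 hb2 (hga ▸ hab)
        have := hdall o b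
        omega
      · have hd := gate_dist hconn hB hg haB
        have : G.dist g a = 2 :=
          bip_dist_same1 hconn (bip_symm hbip) hg2 ha2 hga
        have := hdall o a
        omega
  · -- w is outside the block
    obtain ⟨s, hs⟩ := gate_exists hconn ⟨z, hzB⟩ hwB
    have hwsz : G.dist w z = G.dist w s + G.dist s z := gate_dist hconn hB hs hzB
    have hwz2 : G.dist w z = 2 := by rw [SimpleGraph.dist_comm]; exact ht
    rcases bip_mem_cases hbip hs.1 with hs1 | hs2
    · by_cases hsz : s = z
      · have hza : G.dist z a = 1 := bip_dist_cross hbip hz1 ha2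
        have hd := gate_dist hconn hB hs haB
        have hsa : G.dist s a = 1 := by rw [hsz]; exact hza
        have hws : G.dist w s = 2 := by
          have : G.dist s z = 0 := by rw [hsz, SimpleGraph.dist_self]
          omega
        have := hdall w a
        omega
      · have hsz2 : G.dist s z = 2 := bip_dist_same1 hconn hbip hs1 hz1 hsz
        have hws0 : G.dist w s = 0 := by omega
        exact hwB ((hconn.dist_eq_zero_iff.1 hws0) ▸ hs.1)
    · have hsz1 : G.dist s z = 1 := by
        rw [SimpleGraph.dist_comm]; exact bip_dist_cross hbip hz1 hs2
      have hws1 : G.dist w s = 1 := by omega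
      by_cases hsa : s = a
      · have hd := gate_dist hconn hB hs hbB
        have : G.dist s b = 2 :=
          bip_dist_same1 hconn (bip_symm hbip) hs2 hb2 (hsa ▸ hab)
        have := hdall w b
        omega
      · have hd := gate_dist hconn hB hs haB
        have : G.dist s a = 2 :=
          bip_dist_same1 hconn (bip_symm hbip) hs2 ha2 hsa
        have := hdall w a
        omega

lemma adj_getVert_of_succ {W : G.Walk a b} {i j : ℕ} (h : i + 1 = j) (hj : j ≤ W.length) :
    G.Adj (W.getVert i) (W.getVert j) := by
  subst h
  exact W.adj_getVert_succ (by omega)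

lemma bip_other (hbip : CompBipOn G B V1 V2) (hu : u ∈ V1) (hadj : G.Adj u v)
    (hvB : v ∈ B) : v ∈ V2 := by
  rcases (hbip.2.2.2.2 u (bip_sub1 hbip hu) v hvB).1 hadj with ⟨_, h⟩ | ⟨h, _⟩
  · exact h
  · exact absurd rfl (hbip.2.2.1.ne_of_mem hu h)

lemma midblock [Fintype V] (hconn : G.Connected) {a b : V} {p : G.Walk a b}
    (hlen : p.length = G.dist a b) {i : ℕ} (hi1 : 1 ≤ i) (hi2 : i + 1 ≤ p.length)
    (hra : RA G {p.getVert i} a b) :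
    ∃ B, IsBlockSet G B ∧ p.getVert (i-1) ∈ B ∧ p.getVert i ∈ B ∧ p.getVert (i+1) ∈ B := by
  classical
  set x := p.getVert (i-1) with hxdef
  set z := p.getVert i with hzdef
  set y := p.getVert (i+1) with hydef
  have hxz : x ≠ z := geo_ne hconn hlen (by omega) (by omega) (by omega)
  have hyz : y ≠ z := geo_ne hconn hlen (by omega) (by omega) (by omega)
  have haxz : G.Adj x z := adj_getVert_of_succ (by omega) (by omega)
  have hayz : G.Adj y z := (adj_getVert_of_succ (by omega : i + 1 = i + 1) hi2).symm
  -- a reaches x avoiding z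
  have hrax : RA G {z} a x := by
    obtain ⟨P, hP⟩ := exists_prefix_walk p (show i - 1 ≤ p.length by omega)
    refine ⟨P, fun q hq hqz => ?_⟩
    obtain ⟨j, hj, rfl⟩ := hP q hq
    exact geo_ne hconn hlen (show j ≠ i by omega) (by omega) (by omega)
      (Set.mem_singleton_iff.1 hqz)
  -- y reaches b avoiding z
  have hray : RA G {z} y b := by
    obtain ⟨P, hP⟩ := exists_suffix_walk p (p.length - (i+1)) (i+1) (by omega)
    refine ⟨P, fun q hq hqz => ?_⟩
    obtain ⟨j, hj, rfl⟩ := hP q hq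
    by_cases hjl : j ≤ p.length
    · exact geo_ne hconn hlen (show j ≠ i by omega) hjl (by omega)
        (Set.mem_singleton_iff.1 hqz)
    · have : p.getVert j = p.getVert p.length := by
        rw [p.getVert_length, p.getVert_of_length_le (by omega : p.length ≤ j)]
      rw [this] at hqz
      exact geo_ne hconn hlen (show p.length ≠ i by omega) (le_refl _) (by omega)
        (Set.mem_singleton_iff.1 hqz)
  have hraxy : RA G {z} x y := (hrax.symm.trans hra).trans hray.symm
  obtain ⟨Wxy, hWav⟩ := hraxy
  have hbyav : ∀ q ∈ Wxy.bypass.support, q ≠ z := fun q hq =>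
    fun hc => hWav q (Wxy.support_bypass_subset hq) (by simp [hc])
  have hzQ : z ∉ Wxy.bypass.support := fun hc => hbyav z hc rfl
  have hPpath : (Wxy.bypass.concat hayz).IsPath :=
    isPath_concat Wxy.bypass_isPath hayz hzQ
  have hear := ear (goodSet_pair haxz.symm) hPpath hxz (by exact Or.inr rfl)
      (by exact Or.inl rfl) ?hint
  case hint =>
    intro q hq hqB
    rcases hqB with hq1 | hq2
    · exact Or.inr hq1
    · exact Or.inl hq2
  obtain ⟨B, hSB, hBblk⟩ := exists_block_superset hear
  refine ⟨B, hBblk, ?_, ?_, ?_⟩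
  · exact hSB (Or.inl (Or.inr rfl))
  · exact hSB (Or.inl (Or.inl rfl))
  · refine hSB (Or.inr ?_)
    show y ∈ (Wxy.bypass.concat hayz).support
    rw [Walk.support_concat, List.mem_append]
    exact Or.inl Wxy.bypass.end_mem_support


end BB

theorem stmt_16 {V : Type*} [Fintype V] (G : SimpleGraph V) (hG : ClassB G)
    {a b : V} (p : G.Walk a b) (hpath : p.IsPath)
    (hlen : p.length = G.dist a b) (hdiam : G.dist a b = gdiam G) :
    ∃ z ∈ p.support, z ∈ gcenter G := by
  classical
  obtain ⟨⟨hconn, hbipall⟩, hblocks2, hcut2⟩ := hG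
  haveI : Nonempty V := ⟨a⟩
  set d := G.dist a b with hd
  set k := (d+1)/2 with hk
  have hlow : ∀ v, k ≤ ecc G v := by
    intro v
    have h1 : G.dist a b ≤ G.dist a v + G.dist v b := hconn.dist_triangle
    have h2 : G.dist a v = G.dist v a := SimpleGraph.dist_comm ..
    have h3 := BB.dist_le_ecc (G := G) v a
    have h4 := BB.dist_le_ecc (G := G) v b
    omega
  have hdall : ∀ u v : V, G.dist u v ≤ d := by
    intro u v
    exact le_of_le_of_eq (BB.dist_le_gdiam u v) hdiam.symm
  suffices h : ∃ i, i ≤ p.length ∧ ∀ w, G.dist (p.getVert i) w ≤ k by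
    obtain ⟨i, hip, hiw⟩ := h
    exact ⟨p.getVert i, Walk.mem_support_iff_exists_getVert.2 ⟨i, rfl, hip⟩,
      BB.central_of hiw hlow⟩
  by_cases hd1 : d ≤ 1
  · refine ⟨0, by omega, fun w => ?_⟩
    rw [p.getVert_zero]
    have := hdall a w
    omega
  push_neg at hd1
  have hlend : p.length = d := hlen
  set m := d - k with hm
  by_cases hsep1 : BB.RA G {p.getVert m} a b
  swap
  · refine ⟨m, by omega, fun w => ?_⟩
    by_cases hw : w = p.getVert m
    · rw [hw, SimpleGraph.dist_self]
      omega
    have ham : G.dist a (p.getVert m) = m := BB.geo_dist_left hconn hlen (by omega)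
    have hbm : G.dist (p.getVert m) b = p.length - m := BB.geo_dist_right hconn hlen (by omega)
    have hbm' : G.dist b (p.getVert m) = G.dist (p.getVert m) b := SimpleGraph.dist_comm ..
    have hane : a ≠ p.getVert m := by
      have := BB.geo_ne hconn hlen (show (0:ℕ) ≠ m by omega) (by omega) (by omega)
      rwa [p.getVert_zero] at this
    have hbne : b ≠ p.getVert m := by
      have := BB.geo_ne hconn hlen (show p.length ≠ m by omega) (le_refl _) (by omega)
      rwa [p.getVert_length] at this
    have hdw : G.dist (p.getVert m) w = G.dist (p.getVert m) w := rfl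
    rcases BB.sep_ecc_bound hconn hsep1 hane hbne w hw with hcase | hcase
    · have := hdall a w
      omega
    · have := hdall b w
      omega
  by_cases hsep2 : BB.RA G {p.getVert k} a b
  swap
  · refine ⟨k, by omega, fun w => ?_⟩
    by_cases hw : w = p.getVert k
    · rw [hw, SimpleGraph.dist_self]
      omega
    have ham : G.dist a (p.getVert k) = k := BB.geo_dist_left hconn hlen (by omega)
    have hbm : G.dist (p.getVert k) b = p.length - k := BB.geo_dist_right hconn hlen (by omega)
    have hbm' : G.dist b (p.getVert k) = G.dist (p.getVert k) b := SimpleGraph.dist_comm ..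
    have hane : a ≠ p.getVert k := by
      have := BB.geo_ne hconn hlen (show (0:ℕ) ≠ k by omega) (by omega) (by omega)
      rwa [p.getVert_zero] at this
    have hbne : b ≠ p.getVert k := by
      have := BB.geo_ne hconn hlen (show p.length ≠ k by omega) (le_refl _) (by omega)
      rwa [p.getVert_length] at this
    rcases BB.sep_ecc_bound hconn hsep2 hane hbne w hw with hcase | hcase
    · have := hdall a w
      omega
    · have := hdall b w
      omega
  obtain ⟨B1, hB1, hB1a, hB1b, hB1c⟩ :=
    BB.midblock hconn hlen (show 1 ≤ m by omega) (by omega) hsep1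
  obtain ⟨B2, hB2, hB2a, hB2b, hB2c⟩ :=
    BB.midblock hconn hlen (show 1 ≤ k by omega) (by omega) hsep2
  by_cases hpar : k = m
  swap
  · -- odd diameter : contradiction
    exfalso
    have hkm : k = m + 1 := by omega
    have hmk1 : k - 1 = m := by omega
    rw [hmk1] at hB2a
    have hmk2 : m + 1 = k := by omega
    rw [hmk2] at hB1c
    have hBeq : B1 = B2 :=
      BB.block_eq_of_two_mem hB1 hB2
        (BB.geo_ne hconn hlen (show m ≠ k by omega) (by omega) (by omega))
        hB1b hB2a hB1c hB2b
    obtain ⟨P1, P2, hbip⟩ := hbipall B1 hB1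
    have hfar := BB.bip_dist_le_two hconn hbip hB1a (hBeq ▸ hB2c)
    have hdist := BB.geo_dist_between hconn hlen (show m - 1 ≤ k+1 by omega) (by omega)
    omega
  · -- even diameter
    rw [← hpar] at hB1a hB1b hB1c
    obtain ⟨P1, P2, hbip⟩ := hbipall B1 hB1
    refine ⟨k, by omega, fun w => ?_⟩
    by_contra hcon
    push_neg at hcon
    have hadjx : G.Adj (p.getVert k) (p.getVert (k-1)) :=
      (BB.adj_getVert_of_succ (show k-1+1 = k by omega) (by omega)).symm
    have hadjy : G.Adj (p.getVert k) (p.getVert (k+1)) :=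
      BB.adj_getVert_of_succ rfl (by omega)
    have hxy : p.getVert (k-1) ≠ p.getVert (k+1) :=
      BB.geo_ne hconn hlen (by omega) (by omega) (by omega)
    by_cases hks : k = 1
    · -- diameter 2
      have hcore : ∀ Q1 Q2 : Set V, CompBipOn G B1 Q1 Q2 → p.getVert k ∈ Q1 → False := by
        intro Q1 Q2 hb' hz1
        have haQ2 : p.getVert (k-1) ∈ Q2 := BB.bip_other hb' hz1 hadjx hB1a
        have hbQ2 : p.getVert (k+1) ∈ Q2 := BB.bip_other hb' hz1 hadjy hB1c
        exact BB.even1_core (w := w) hconn hblocks2 hB1 hb' hz1 haQ2 hbQ2 hxy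
          (fun u v => by have := hdall u v; omega) (by omega)
      rcases BB.bip_mem_cases hbip hB1b with h | h
      · exact (hcore P1 P2 hbip h).elim
      · exact (hcore P2 P1 (BB.bip_symm hbip) h).elim
    · have hk2 : 2 ≤ k := by omega
      have hgx : BB.IsGate G B1 a (p.getVert (k-1)) := by
        refine ⟨hB1a, p.getVert (k-2),
          ?_, BB.adj_getVert_of_succ (show k-2+1 = k-1 by omega) (by omega)⟩
        obtain ⟨P, hP⟩ := BB.exists_prefix_walk p (show k-2 ≤ p.length by omega)
        refine ⟨P, fun q hq hqB => ?_⟩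
        obtain ⟨j, hj, rfl⟩ := hP q hq
        have hle2 := BB.bip_dist_le_two hconn hbip hqB hB1c
        have := BB.geo_dist_between hconn hlen (show j ≤ k+1 by omega) (by omega)
        omega
      have hgy : BB.IsGate G B1 b (p.getVert (k+1)) := by
        refine ⟨hB1c, p.getVert (k+2), ?_,
          (BB.adj_getVert_of_succ (show k+1+1 = k+2 by omega) (by omega)).symm⟩
        obtain ⟨P, hP⟩ := BB.exists_suffix_walk p (p.length - (k+2)) (k+2) (by omega)
        refine BB.RA.symm ⟨P, fun q hq hqB => ?_⟩
        obtain ⟨j, hj, rfl⟩ := hP q hq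
        by_cases hjl : j ≤ p.length
        · have hle2 := BB.bip_dist_le_two hconn hbip hB1a hqB
          have := BB.geo_dist_between hconn hlen (show k-1 ≤ j by omega) hjl
          omega
        · have heq : p.getVert j = p.getVert p.length := by
            rw [p.getVert_length, p.getVert_of_length_le (by omega)]
          rw [heq] at hqB
          have hle2 := BB.bip_dist_le_two hconn hbip hB1a hqB
          have := BB.geo_dist_between hconn hlen (show k-1 ≤ p.length by omega) (le_refl _)
          omega
      have hax : G.dist a (p.getVert (k-1)) = k - 1 :=
        BB.geo_dist_left hconn hlen (by omega)
      have hby : G.dist b (p.getVert (k+1)) = k - 1 := by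
        have h1 : G.dist (p.getVert (k+1)) b = p.length - (k+1) :=
          BB.geo_dist_right hconn hlen (by omega)
        have h2 : G.dist b (p.getVert (k+1)) = G.dist (p.getVert (k+1)) b :=
          SimpleGraph.dist_comm ..
        omega
      have hcore : ∀ Q1 Q2 : Set V, CompBipOn G B1 Q1 Q2 → p.getVert k ∈ Q1 → False := by
        intro Q1 Q2 hb' hz1
        have hx2 : p.getVert (k-1) ∈ Q2 := BB.bip_other hb' hz1 hadjx hB1a
        have hy2 : p.getVert (k+1) ∈ Q2 := BB.bip_other hb' hz1 hadjy hB1c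
        exact BB.even_core (w := w) hconn (hcut2 B1 hB1) hB1 hb' hk2 hz1 hx2 hy2 hxy hax hby
          hgx hgy (fun u v => by have := hdall u v; omega) (by omega)
      rcases BB.bip_mem_cases hbip hB1b with h | h
      · exact (hcore P1 P2 hbip h).elim
      · exact (hcore P2 P1 (BB.bip_symm hbip) h).elim
end
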